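/- arXiv:1701.03604 — 10 statements merged into one kernel-verified Lean document; each statement's English description precedes it below -/
import Mathlib

section
/- Let G be a locally compact topological group with Hausdorffication π : G → G̃, and let a ∈ G. Then a is an aperiodic element of G if and only if π(a) is an aperiodic element of G̃. -/
open Pointwise


/-- An element of a topological group is *periodic* if the closed subgroup it generates
(the closure of the cyclic subgroup `⟨a⟩`) is compact, and *aperiodic* otherwise. -/
def IsAperiodic {G : Type*} [Group G] [TopologicalSpace G] (a : G) : Prop :=
  ¬ IsCompact (closure (Subgroup.zpowers a : Set G))

/-- The kernel of the Hausdorffication: the closure of the trivial subgroup,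
i.e. the closure of `{e}`. -/
def hausdorffKer (G : Type*) [Group G] [TopologicalSpace G] [IsTopologicalGroup G] : Subgroup G :=
  (⊥ : Subgroup G).topologicalClosure

instance {G : Type*} [Group G] [TopologicalSpace G] [IsTopologicalGroup G] :
    (hausdorffKer G).Normal :=
  Subgroup.is_normal_topologicalClosure _

section aux
variable {G : Type*} [Group G] [TopologicalSpace G] [IsTopologicalGroup G]

lemma hausdorffKer_subset_nhds_one {U : Set G} (hU : U ∈ nhds (1 : G)) :
    (hausdorffKer G : Set G) ⊆ U := by
  intro x hx
  obtain ⟨V, hVU, hV, h1V⟩ := mem_nhds_iff.mp hU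
  have hxinv : x⁻¹ ∈ hausdorffKer G := (hausdorffKer G).inv_mem hx
  have hxc : x⁻¹ ∈ closure ({1} : Set G) := by
    have : x⁻¹ ∈ closure (((⊥ : Subgroup G) : Set G)) := hxinv
    simpa using this
  rw [mem_closure_iff] at hxc
  have := hxc (x⁻¹ • V) (hV.smul x⁻¹) ⟨1, h1V, by simp⟩
  obtain ⟨y, hy, hy1⟩ := this
  rw [Set.mem_singleton_iff] at hy1
  subst hy1
  obtain ⟨v, hv, hv1⟩ := hy
  have hvx : x = v := inv_mul_eq_one.mp hv1
  exact hVU (hvx ▸ hv)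

lemma isCompact_hausdorffKer : IsCompact (hausdorffKer G : Set G) := by
  rw [isCompact_iff_ultrafilter_le_nhds]
  intro f hf
  refine ⟨1, (hausdorffKer G).one_mem, ?_⟩
  refine le_trans hf ?_
  intro U hU
  exact Filter.mem_principal.mpr (hausdorffKer_subset_nhds_one hU)

lemma isProperMap_hausdorff_mk :
    IsProperMap (QuotientGroup.mk : G → G ⧸ hausdorffKer G) := by
  rw [isProperMap_iff_isClosedMap_and_compact_fibers]
  refine ⟨continuous_quot_mk, QuotientGroup.isClosedMap_coe isCompact_hausdorffKer, ?_⟩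
  intro y
  obtain ⟨x, rfl⟩ := QuotientGroup.mk_surjective y
  have : (QuotientGroup.mk ⁻¹' {(QuotientGroup.mk x : G ⧸ hausdorffKer G)})
      = x • (hausdorffKer G : Set G) := by
    ext z
    simp only [Set.mem_preimage, Set.mem_singleton_iff, mem_leftCoset_iff, SetLike.mem_coe]
    exact ⟨fun h => QuotientGroup.eq.mp h.symm, fun h => (QuotientGroup.eq.mpr h).symm⟩
  rw [this]
  exact (isCompact_hausdorffKer).smul x

end aux

/-- In a locally compact group `G`, an element `a` is aperiodic if and only if its image
in the Hausdorffication `G̃ = G / cl({e})` is aperiodic. -/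
theorem isAperiodic_iff_isAperiodic_hausdorffication
    {G : Type*} [Group G] [TopologicalSpace G] [IsTopologicalGroup G] [LocallyCompactSpace G]
    (a : G) :
    IsAperiodic a ↔ IsAperiodic (QuotientGroup.mk a : G ⧸ hausdorffKer G) := by
  rw [IsAperiodic, IsAperiodic, not_iff_not]
  set π : G → G ⧸ hausdorffKer G := QuotientGroup.mk
  have himg : (Subgroup.zpowers (QuotientGroup.mk a : G ⧸ hausdorffKer G) : Set _)
      = π '' (Subgroup.zpowers a : Set G) := by
    ext y
    simp only [SetLike.mem_coe, Subgroup.mem_zpowers_iff, Set.mem_image]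
    constructor
    · rintro ⟨n, rfl⟩
      exact ⟨a ^ n, ⟨n, rfl⟩, (map_zpow (QuotientGroup.mk' (hausdorffKer G)) a n).symm⟩
    · rintro ⟨x, ⟨n, rfl⟩, rfl⟩
      exact ⟨n, map_zpow (QuotientGroup.mk' (hausdorffKer G)) a n⟩
  constructor
  · intro h
    rw [himg]
    have hclosed : IsClosed (π '' closure (Subgroup.zpowers a : Set G)) :=
      QuotientGroup.isClosedMap_coe isCompact_hausdorffKer _ isClosed_closure
    have hsub : closure (π '' (Subgroup.zpowers a : Set G))
        ⊆ π '' closure (Subgroup.zpowers a : Set G) :=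
      closure_minimal (Set.image_mono subset_closure) hclosed
    exact (h.image continuous_quot_mk).of_isClosed_subset isClosed_closure hsub
  · intro h
    have hp : IsCompact (π ⁻¹' closure (Subgroup.zpowers (QuotientGroup.mk a :
        G ⧸ hausdorffKer G) : Set _)) :=
      isProperMap_hausdorff_mk.isCompact_preimage h
    refine hp.of_isClosed_subset isClosed_closure ?_
    refine closure_minimal ?_ (isClosed_closure.preimage continuous_quot_mk)
    intro x hx
    simp only [Set.mem_preimage]
    apply subset_closure
    rw [himg]
    exact Set.mem_image_of_mem π hx
end

section
/- Let G be a first countable locally compact topological group and let a ∈ G be an aperiodic element. Then for every compact subset K of G there exists N ∈ ℕ such that K ∩ Ka^n = ∅ for all n > N. -/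
open Filter Topology Set Pointwise

/-- If `a` is an aperiodic element of a first countable locally compact group `G`, then for
every compact subset `K` of `G` there is `N` such that `K ∩ K a^n = ∅` for all `n > N`. -/
theorem runaway_of_isAperiodic
    {G : Type*} [Group G] [TopologicalSpace G] [IsTopologicalGroup G]
    [FirstCountableTopology G] [LocallyCompactSpace G]
    (a : G) (ha : IsAperiodic a) :
    ∀ K : Set G, IsCompact K → ∃ N : ℕ, ∀ n : ℕ, N < n →
      K ∩ ((fun x => x * a ^ n) '' K) = ∅ := by
  intro K hK
  by_contra hcon
  push_neg at hcon
  -- the set of "differences" of K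
  have hCcomp : IsCompact ((fun p : G × G => p.1⁻¹ * p.2) '' (K ×ˢ K)) :=
    (hK.prod hK).image (continuous_fst.inv.mul continuous_snd)
  obtain ⟨V, hV, hCV⟩ := exists_compact_superset (hCcomp.insert 1)
  set O : Set G := interior V with hO
  have hOopen : IsOpen O := isOpen_interior
  have h1O : (1 : G) ∈ O := hCV (mem_insert _ _)
  set R : Set ℕ := {n | 1 ≤ n ∧ a ^ n ∈ O} with hRdef
  have hmemR : ∀ n, n ∈ R ↔ (1 ≤ n ∧ a ^ n ∈ O) := fun n => Iff.rfl
  -- returns happen at unboundedly large times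
  have hR : ∀ N : ℕ, ∃ n, N < n ∧ n ∈ R := by
    intro N
    obtain ⟨n, hn, hne⟩ := hcon N
    obtain ⟨y, hyK, himg⟩ := hne
    obtain ⟨x, hxK, hxy⟩ := himg
    have haC : a ^ n ∈ (fun p : G × G => p.1⁻¹ * p.2) '' (K ×ˢ K) := by
      refine ⟨(x, y), ⟨hxK, hyK⟩, ?_⟩
      simp only
      rw [← hxy]
      group
    exact ⟨n, hn, by omega, hCV (mem_insert_of_mem _ haC)⟩
  by_cases hcase : ∃ i, ∀ m, i ≤ m → m ∈ R → ∃ t, 1 ≤ t ∧ t ≤ i ∧ m + t ∈ R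
  · -- syndetic case: all powers of `a` lie in a fixed compact set
    obtain ⟨i, hi⟩ := hcase
    obtain ⟨r, hir, hrR⟩ := hR i
    have key : ∀ m, r ≤ m → ∃ u, u ∈ R ∧ i ≤ u ∧ u ≤ m ∧ m - u ≤ i := by
      intro m hm
      induction m, hm using Nat.le_induction with
      | base => exact ⟨r, hrR, by omega, le_rfl, by omega⟩
      | succ m hm ih =>
        obtain ⟨u, huR, hiu, hum, hmu⟩ := ih
        by_cases hcl : m + 1 - u ≤ i
        · exact ⟨u, huR, hiu, by omega, hcl⟩
        · obtain ⟨t, ht1, hti, htR⟩ := hi u hiu huR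
          exact ⟨u + t, htR, by omega, by omega, by omega⟩
    set T : Set G := (fun t : ℕ => a ^ t) '' Set.Iic (max r i) with hT
    have hTcomp : IsCompact T := ((Set.finite_Iic _).image _).isCompact
    have hnat : ∀ m : ℕ, a ^ m ∈ V * T ∪ T := by
      intro m
      by_cases hm : m ≤ max r i
      · exact Or.inr ⟨m, hm, rfl⟩
      · have hrm : r ≤ m := by omega
        obtain ⟨u, huR, hiu, hum, hmu⟩ := key m hrm
        have hmEq : a ^ m = a ^ u * a ^ (m - u) := by
          rw [← pow_add]; congr 1; omega
        have h1 : a ^ u ∈ V := interior_subset huR.2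
        have h2 : a ^ (m - u) ∈ T := ⟨m - u, le_sup_of_le_right hmu, rfl⟩
        exact Or.inl (hmEq ▸ Set.mul_mem_mul h1 h2)
    have hE : IsCompact ((V * T ∪ T) ∪ (V * T ∪ T)⁻¹) :=
      ((hV.mul hTcomp).union hTcomp).union ((hV.mul hTcomp).union hTcomp).inv
    have hsub : (Subgroup.zpowers a : Set G) ⊆ (V * T ∪ T) ∪ (V * T ∪ T)⁻¹ := by
      rintro x ⟨k, rfl⟩
      match k with
      | Int.ofNat n =>
        simp only [Int.ofNat_eq_coe, zpow_natCast]
        exact Or.inl (hnat n)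
      | Int.negSucc n =>
        simp only [zpow_negSucc]
        exact Or.inr (Set.inv_mem_inv.2 (hnat _))
    exact ha (IsCompact.of_isClosed_subset hE.closure isClosed_closure (closure_mono hsub))
  · -- unbounded gaps case
    push_neg at hcase
    choose s hs1 hs2 hs3 using hcase
    have hmem : ∀ n, (fun n => a ^ s n) n ∈ V := fun n => interior_subset (hs2 n).2
    obtain ⟨z, hzV, φ, hφ, hlim⟩ := hV.tendsto_subseq hmem
    have hlim' : Tendsto (fun i => a ^ s (φ i)) atTop (𝓝 z) := hlim
    -- Fact A: `z * a ^ t` is never in `O` for `t ≥ 1`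
    have factA : ∀ t : ℕ, 1 ≤ t → z * a ^ t ∉ O := by
      intro t ht
      have hlim2 : Tendsto (fun i => a ^ s (φ i) * a ^ t) atTop (𝓝 (z * a ^ t)) :=
        hlim'.mul tendsto_const_nhds
      have hev : ∀ᶠ i in atTop, a ^ s (φ i) * a ^ t ∈ Oᶜ := by
        filter_upwards [eventually_ge_atTop t] with i hi
        have htφ : t ≤ φ i := hi.trans hφ.le_apply
        have hnR : s (φ i) + t ∉ R := hs3 (φ i) t ht htφ
        intro hmemO
        exact hnR ⟨by omega, by rwa [pow_add]⟩
      exact hOopen.isClosed_compl.mem_of_tendsto hlim2 hev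
    -- But a two-step limit shows that some `z * a ^ t ∈ O`
    have hlim3 : Tendsto (fun j => z * (a ^ s (φ j))⁻¹ * (a ^ s (φ j))⁻¹ * z) atTop
        (𝓝 (z * z⁻¹ * z⁻¹ * z)) :=
      ((tendsto_const_nhds.mul hlim'.inv).mul hlim'.inv).mul tendsto_const_nhds
    have hzz : z * z⁻¹ * z⁻¹ * z = 1 := by group
    rw [hzz] at hlim3
    obtain ⟨j, hj⟩ := (hlim3.eventually_mem (hOopen.mem_nhds h1O)).exists
    have hlim4 : Tendsto (fun k => z * (a ^ s (φ j))⁻¹ * (a ^ s (φ j))⁻¹ * a ^ s (φ k)) atTop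
        (𝓝 (z * (a ^ s (φ j))⁻¹ * (a ^ s (φ j))⁻¹ * z)) :=
      tendsto_const_nhds.mul hlim'
    obtain ⟨k, hk1, hk2⟩ := ((hlim4.eventually_mem (hOopen.mem_nhds hj)).and
      (eventually_ge_atTop (2 * s (φ j) + 1))).exists
    have hsk : 2 * s (φ j) + 1 ≤ s (φ k) := hk2.trans (hφ.le_apply.trans (hs1 (φ k)))
    set t := s (φ k) - 2 * s (φ j) with htdef
    have ht1 : 1 ≤ t := by omega
    refine factA t ht1 ?_
    have hpow : a ^ s (φ k) = a ^ s (φ j) * a ^ s (φ j) * a ^ t := by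
      rw [← pow_add, ← pow_add]; congr 1; omega
    have hEq : z * a ^ t = z * (a ^ s (φ j))⁻¹ * (a ^ s (φ j))⁻¹ * a ^ s (φ k) := by
      rw [hpow]; group
    rw [hEq]
    exact hk1
end

section
/- Let G be a first countable locally compact Hausdorff topological group and let a ∈ G be an aperiodic element. Then the closed subgroup G(a) generated by a, with the subspace topology, is topologically isomorphic to the discrete group ℤ of integers; in particular G(a) equals the cyclic subgroup ⟨a⟩, the map n ↦ a^n is injective, and G(a) is discrete. -/
open Filter Set Topology

lemma aux_compact {G : Type*} [Group G] [TopologicalSpace G] [IsTopologicalGroup G]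
    [FirstCountableTopology G] [LocallyCompactSpace G] [T2Space G]
    (a : G) (s : ℕ → ℕ) (hs : Tendsto s atTop atTop)
    (hc : Tendsto (fun k => a ^ s k) atTop (𝓝 1)) :
    IsCompact (closure (Subgroup.zpowers a : Set G)) := by
  classical
  by_contra hnc
  -- Step 1: tail density
  have tail : ∀ N : ℕ, (Subgroup.zpowers a : Set G) ⊆
      closure ((fun i : ℕ => a ^ i) '' Set.Ici N) := by
    intro N x hx
    obtain ⟨m, hm⟩ := Subgroup.mem_zpowers_iff.mp hx
    have hlim : Tendsto (fun k => a ^ m * a ^ s k) atTop (𝓝 x) := by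
      have := (tendsto_const_nhds (x := a ^ m) (f := (atTop : Filter ℕ))).mul hc
      simpa [hm] using this
    refine mem_closure_of_tendsto hlim ?_
    have hev : ∀ᶠ k in atTop, N + m.natAbs ≤ s k := hs.eventually (eventually_ge_atTop _)
    filter_upwards [hev] with k hk
    have h0 : 0 ≤ m + (s k : ℤ) := by omega
    refine ⟨(m + (s k : ℤ)).toNat, by simp only [Set.mem_Ici]; omega, ?_⟩
    calc a ^ (m + (s k : ℤ)).toNat = a ^ (((m + (s k : ℤ)).toNat : ℤ)) := (zpow_natCast _ _).symm
      _ = a ^ (m + (s k : ℤ)) := by rw [Int.toNat_of_nonneg h0]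
      _ = a ^ m * a ^ ((s k : ℤ)) := zpow_add a m _
      _ = a ^ m * a ^ s k := by rw [zpow_natCast]
  -- Step 2: escape from every compact set
  have escape : ∀ C : Set G, IsCompact C → ∀ N : ℕ, ∃ i : ℕ, N ≤ i ∧ a ^ i ∉ C := by
    intro C hC N
    by_contra h
    push_neg at h
    apply hnc
    refine hC.of_isClosed_subset isClosed_closure ?_
    have h1 : (fun i : ℕ => a ^ i) '' Set.Ici N ⊆ C := by
      rintro _ ⟨i, hi, rfl⟩; exact h i hi
    have h2 : closure ((fun i : ℕ => a ^ i) '' Set.Ici N) ⊆ C :=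
      closure_minimal h1 hC.isClosed
    exact (closure_minimal (tail N) isClosed_closure).trans h2
  -- Step 3: a relatively compact open neighborhood of 1
  obtain ⟨K, hKc, hK1⟩ := exists_compact_mem_nhds (1 : G)
  set U : Set G := interior K with hUdef
  have hUopen : IsOpen U := isOpen_interior
  have hU1 : (1 : G) ∈ U := mem_interior_iff_mem_nhds.mpr hK1
  set L : Set G := closure U with hLdef
  have hUL : U ⊆ L := subset_closure
  have hLc : IsCompact L :=
    hKc.of_isClosed_subset isClosed_closure (closure_minimal interior_subset hKc.isClosed)
  -- a base return time s₀ with a ^ s₀ ∈ U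
  obtain ⟨k₀, hk₀⟩ := (hc.eventually (hUopen.mem_nhds hU1)).exists
  set s₀ : ℕ := s k₀ with hs₀def
  have hs₀ : a ^ s₀ ∈ L := hUL hk₀
  -- Step 4: escape times with long journeys
  have cptC : ∀ j : ℕ, IsCompact (⋃ i ∈ Finset.range (j + 1), (fun x => x * a ^ i) '' L) := by
    intro j
    refine (Finset.range (j + 1)).isCompact_biUnion (fun i _ => ?_)
    exact hLc.image (continuous_mul_right _)
  choose m hm1 hm2 using fun j : ℕ =>
    escape _ (cptC j) (s₀ + j + 1)
  -- last visit to L before time m j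
  set t : ℕ → ℕ := fun j => Nat.findGreatest (fun i => a ^ i ∈ L) (m j) with htdef
  have ht_le : ∀ j, t j ≤ m j := fun j => Nat.findGreatest_le _
  have hs₀m : ∀ j, s₀ ≤ m j := fun j => by have := hm1 j; omega
  have ht_mem : ∀ j, a ^ t j ∈ L := fun j => Nat.findGreatest_spec (P := fun i => a ^ i ∈ L) (hs₀m j) hs₀
  have ht_max : ∀ j i, t j < i → i ≤ m j → a ^ i ∉ L :=
    fun j i h1 h2 => Nat.findGreatest_is_greatest (P := fun i => a ^ i ∈ L) h1 h2
  have hgap : ∀ j, t j + j < m j := by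
    intro j
    by_contra hle
    push_neg at hle
    apply hm2 j
    have hsub : m j - t j < j + 1 := by have := ht_le j; omega
    refine Set.mem_biUnion (Finset.mem_range.mpr hsub) ?_
    refine ⟨a ^ t j, ht_mem j, ?_⟩
    show a ^ t j * a ^ (m j - t j) = a ^ m j
    rw [← pow_add]; congr 1; have := ht_le j; omega
  -- Step 5: exit points cluster
  set y : ℕ → G := fun j => a ^ (t j + 1) with hydef
  have hyL : ∀ j, y j ∈ (fun x => x * a) '' L := fun j => ⟨a ^ t j, ht_mem j, by
    simp only [hydef]; rw [pow_succ]⟩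
  obtain ⟨z, hzmem, φ, hφ, hzt⟩ := (hLc.image (continuous_mul_right a)).tendsto_subseq hyL
  -- Step 6: the forward orbit of z avoids U
  have havoid : ∀ i : ℕ, z * a ^ i ∉ U := by
    intro i
    have hterm : Tendsto (fun l => y (φ l) * a ^ i) atTop (𝓝 (z * a ^ i)) :=
      hzt.mul tendsto_const_nhds
    have hev : ∀ᶠ l in atTop, y (φ l) * a ^ i ∈ Uᶜ := by
      filter_upwards [eventually_ge_atTop (i + 1)] with l hl
      have hφl : i + 1 ≤ φ l := hl.trans (hφ.le_apply)
      have heq : y (φ l) * a ^ i = a ^ (t (φ l) + 1 + i) := by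
        simp only [hydef]; rw [← pow_add]
      rw [heq]
      intro hmem
      exact ht_max (φ l) (t (φ l) + 1 + i) (by omega)
        (by have := hgap (φ l); omega) (hUL hmem)
    have : z * a ^ i ∈ Uᶜ :=
      (hUopen.isClosed_compl).mem_of_tendsto hterm hev
    exact this
  -- Step 7: contradiction with density
  have hzH : z ∈ (Subgroup.zpowers a).topologicalClosure := by
    have : z ∈ closure (Subgroup.zpowers a : Set G) := by
      refine mem_closure_of_tendsto hzt (Eventually.of_forall fun l => ?_)
      refine ⟨((t (φ l) + 1 : ℕ) : ℤ), ?_⟩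
      show a ^ ((t (φ l) + 1 : ℕ) : ℤ) = (y ∘ φ) l
      rw [zpow_natCast]; rfl
    exact this
  have hzinv : z⁻¹ ∈ closure (Subgroup.zpowers a : Set G) :=
    (Subgroup.zpowers a).topologicalClosure.inv_mem hzH
  have hz0 : z⁻¹ ∈ closure ((fun i : ℕ => a ^ i) '' Set.Ici 0) :=
    closure_minimal (tail 0) isClosed_closure hzinv
  rw [mem_closure_iff] at hz0
  obtain ⟨x, hxV, hximg⟩ := hz0 ((fun x => z * x) ⁻¹' U)
    (hUopen.preimage (continuous_mul_left z)) (by simp [hU1])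
  obtain ⟨i, -, rfl⟩ := hximg
  exact havoid i hxV

/-- If `a` is an aperiodic element of a first countable locally compact Hausdorff group `G`,
then the closed subgroup `G(a)` generated by `a` (with the subspace topology) is
topologically isomorphic to the discrete group `ℤ`; in particular `G(a) = ⟨a⟩`, the map
`n ↦ a ^ n` is injective, and `G(a)` is discrete. -/
theorem closedSubgroupGenerated_topIsomorphic_int
    {G : Type*} [Group G] [TopologicalSpace G] [IsTopologicalGroup G]
    [FirstCountableTopology G] [LocallyCompactSpace G] [T2Space G]
    (a : G) (ha : IsAperiodic a) :
    (∃ e : (Subgroup.zpowers a).topologicalClosure ≃* Multiplicative ℤ,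
      Continuous e ∧ Continuous e.symm) ∧
    (Subgroup.zpowers a).topologicalClosure = Subgroup.zpowers a ∧
    Function.Injective (fun n : ℤ => a ^ n) ∧
    DiscreteTopology ((Subgroup.zpowers a).topologicalClosure) := by
  classical
  -- `a` has infinite order
  have hfin : ¬ IsOfFinOrder a := by
    intro h
    have hfs : (Subgroup.zpowers a : Set G).Finite := h.finite_zpowers
    exact ha (by rw [hfs.isClosed.closure_eq]; exact hfs.isCompact)
  have hinj : Function.Injective fun n : ℤ => a ^ n :=
    injective_zpow_iff_not_isOfFinOrder.mpr hfin
  -- `1` is isolated in `⟨a⟩`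
  have hiso : ∃ U : Set G, IsOpen U ∧ (1 : G) ∈ U ∧
      ∀ x ∈ U, x ∈ (Subgroup.zpowers a : Set G) → x = 1 := by
    by_contra hno
    push_neg at hno
    obtain ⟨W, hW⟩ := (𝓝 (1 : G)).exists_antitone_basis
    have key : ∀ k : ℕ, ∃ n : ℤ, a ^ n ∈ W k ∧ k < n.natAbs := by
      intro k
      set F : Set G := (fun i : ℤ => a ^ i) '' {i : ℤ | i ≠ 0 ∧ i.natAbs ≤ k} with hFdef
      have hFfin : F.Finite := by
        refine Set.Finite.image _ (Set.Finite.subset (Set.finite_Icc (-(k : ℤ)) k) ?_)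
        intro i hi
        simp only [Set.mem_setOf_eq] at hi
        simp only [Set.mem_Icc]
        omega
      have h1F : (1 : G) ∉ F := by
        rintro ⟨i, ⟨hi0, -⟩, hie⟩
        exact hi0 (hinj (show a ^ i = a ^ (0 : ℤ) by simpa using hie))
      have hN : W k \ F ∈ 𝓝 (1 : G) := by
        refine Filter.inter_mem (hW.1.mem_of_mem trivial) ?_
        exact hFfin.isClosed.isOpen_compl.mem_nhds h1F
      obtain ⟨O, hON, hOopen, hO1⟩ := mem_nhds_iff.mp hN
      obtain ⟨x, hxO, hxz, hx1⟩ := hno O hOopen hO1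
      obtain ⟨n, rfl⟩ := Subgroup.mem_zpowers_iff.mp hxz
      have hn0 : n ≠ 0 := by
        rintro rfl
        exact hx1 (by simp)
      have hmem := hON hxO
      refine ⟨n, hmem.1, ?_⟩
      by_contra hk
      push_neg at hk
      exact hmem.2 ⟨n, ⟨hn0, hk⟩, rfl⟩
    choose n hn1 hn2 using key
    have htend : Filter.Tendsto (fun k => a ^ n k) Filter.atTop (𝓝 1) := hW.tendsto hn1
    have hsign : (∃ᶠ k in Filter.atTop, 0 < n k) ∨ (∃ᶠ k in Filter.atTop, n k < 0) := by
      rw [← Filter.frequently_or_distrib]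
      refine Filter.Eventually.frequently (Filter.Eventually.of_forall fun k => ?_)
      have := hn2 k
      omega
    rcases hsign with hpos | hneg
    · obtain ⟨φ, hφ, hφp⟩ := Filter.extraction_of_frequently_atTop hpos
      refine ha (aux_compact a (fun l => (n (φ l)).natAbs) ?_ ?_)
      · refine Filter.tendsto_atTop_mono (fun l => ?_) Filter.tendsto_id
        have h1 := hn2 (φ l)
        have h2 : l ≤ φ l := hφ.le_apply
        show l ≤ (n (φ l)).natAbs
        omega
      · have heq : ∀ l, a ^ (n (φ l)).natAbs = a ^ n (φ l) := fun l => by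
          rw [← zpow_natCast]
          congr 1
          have := hφp l
          omega
        have := htend.comp hφ.tendsto_atTop
        simpa [Function.comp_def, heq] using this
    · obtain ⟨φ, hφ, hφp⟩ := Filter.extraction_of_frequently_atTop hneg
      have hcpt := aux_compact a⁻¹ (fun l => (n (φ l)).natAbs) ?_ ?_
      · rw [Subgroup.zpowers_inv] at hcpt
        exact ha hcpt
      · refine Filter.tendsto_atTop_mono (fun l => ?_) Filter.tendsto_id
        have h1 := hn2 (φ l)
        have h2 : l ≤ φ l := hφ.le_apply
        show l ≤ (n (φ l)).natAbs
        omega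
      · have heq : ∀ l, (a⁻¹) ^ (n (φ l)).natAbs = a ^ n (φ l) := fun l => by
          rw [inv_pow, ← zpow_natCast, ← zpow_neg]
          congr 1
          have := hφp l
          omega
        have := htend.comp hφ.tendsto_atTop
        simpa [Function.comp_def, heq] using this
  obtain ⟨U, hUo, hU1, hUiso⟩ := hiso
  -- `⟨a⟩` is closed
  have hclosed : IsClosed (Subgroup.zpowers a : Set G) := by
    refine isClosed_of_closure_subset ?_
    intro x hx
    rw [mem_closure_iff_seq_limit] at hx
    obtain ⟨u, hu, hux⟩ := hx
    choose q hq using fun k => Subgroup.mem_zpowers_iff.mp (hu k)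
    obtain ⟨V, hV, hVU⟩ := exists_nhds_split_inv (hUo.mem_nhds hU1)
    have hw : Filter.Tendsto (fun k => u k * x⁻¹) Filter.atTop (𝓝 1) := by
      have := hux.mul (tendsto_const_nhds (x := x⁻¹))
      simpa using this
    obtain ⟨Kk, hKk⟩ := (hw.eventually_mem hV).exists_forall_of_atTop
    have hqconst : ∀ k, Kk ≤ k → q k = q Kk := by
      intro k hk
      have hdiv : u k * x⁻¹ / (u Kk * x⁻¹) ∈ U := hVU _ (hKk k hk) _ (hKk Kk le_rfl)
      have hsimp : u k * x⁻¹ / (u Kk * x⁻¹) = a ^ (q k - q Kk) := by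
        have h1 : u k * x⁻¹ / (u Kk * x⁻¹) = u k * (u Kk)⁻¹ := by
          rw [div_eq_mul_inv, mul_inv_rev, inv_inv, mul_assoc, ← mul_assoc x⁻¹,
            inv_mul_cancel, one_mul]
        rw [h1, ← hq k, ← hq Kk, zpow_sub]
      rw [hsimp] at hdiv
      have h1 : a ^ (q k - q Kk) = 1 :=
        hUiso _ hdiv ⟨q k - q Kk, rfl⟩
      have := hinj (show a ^ (q k - q Kk) = a ^ (0 : ℤ) by simpa using h1)
      omega
    have hconst : ∀ k, Kk ≤ k → u k = u Kk := by
      intro k hk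
      rw [← hq k, ← hq Kk, hqconst k hk]
    have : Filter.Tendsto u Filter.atTop (𝓝 (u Kk)) := by
      refine tendsto_const_nhds.congr' ?_
      filter_upwards [Filter.eventually_ge_atTop Kk] with k hk
      exact (hconst k hk).symm
    have hxu : x = u Kk := tendsto_nhds_unique hux this
    rw [hxu, ← hq Kk]
    exact ⟨q Kk, rfl⟩
  have hEq : (Subgroup.zpowers a).topologicalClosure = Subgroup.zpowers a :=
    SetLike.ext' (by rw [Subgroup.topologicalClosure_coe, hclosed.closure_eq])
  have hdisc : DiscreteTopology ↥(Subgroup.zpowers a) := by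
    rw [discreteTopology_iff_isOpen_singleton_one]
    have hsets : ({1} : Set ↥(Subgroup.zpowers a)) = (Subtype.val) ⁻¹' U := by
      ext x
      simp only [Set.mem_singleton_iff, Set.mem_preimage]
      constructor
      · rintro rfl
        exact hU1
      · intro hxU
        exact Subtype.ext (hUiso _ hxU x.2)
    rw [hsets]
    exact hUo.preimage continuous_subtype_val
  have hdisc' : DiscreteTopology ↥((Subgroup.zpowers a).topologicalClosure) := hEq.symm ▸ hdisc
  -- the isomorphism
  have hinjHom : Function.Injective (zpowersHom G a) := by
    intro p q h
    have : a ^ p.toAdd = a ^ q.toAdd := h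
    have := hinj this
    exact Multiplicative.toAdd.injective this
  have hrange : (zpowersHom G a).range = Subgroup.zpowers a := by
    ext x
    simp only [MonoidHom.mem_range, Subgroup.mem_zpowers_iff]
    constructor
    · rintro ⟨y, rfl⟩
      exact ⟨y.toAdd, rfl⟩
    · rintro ⟨k, rfl⟩
      exact ⟨Multiplicative.ofAdd k, rfl⟩
  refine ⟨⟨(MulEquiv.subgroupCongr (hEq.trans hrange.symm)).trans
      (MonoidHom.ofInjective hinjHom).symm, ?_, ?_⟩, hEq, hinj, hdisc'⟩
  · haveI := hdisc'
    exact continuous_of_discreteTopology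
  · exact continuous_of_discreteTopology
end

section
/- Let G be a locally compact topological group with Hausdorffication π : G → G̃, let a ∈ G, and let A, B be closed subsets of G. Then (A, B) is a terminal pair of G with respect to a if and only if (π(A), π(B)) is a terminal pair of G̃ with respect to π(a). -/
/-- `(A, B)` is a *terminal pair* with respect to `a` if `A` and `B` are disjoint closed
subsets such that every compact set is eventually shifted into `A` by positive powers of
`a` and into `B` by negative powers of `a`. -/
def IsTerminalPair {G : Type*} [Group G] [TopologicalSpace G] (a : G) (A B : Set G) : Prop :=
  IsClosed A ∧ IsClosed B ∧ Disjoint A B ∧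
    ∀ K : Set G, IsCompact K → ∃ N : ℕ, ∀ n : ℕ, N ≤ n → ∀ x ∈ K,
      x * a ^ n ∈ A ∧ x * a ^ (-(n : ℤ)) ∈ B

/-- Closed sets are saturated for the Hausdorffication. -/
lemma hausdorff_saturated {G : Type*} [Group G] [TopologicalSpace G] [IsTopologicalGroup G]
    {A : Set G} (hA : IsClosed A) {x : G}
    (hx : (QuotientGroup.mk x : G ⧸ hausdorffKer G) ∈ (QuotientGroup.mk : G → G ⧸ hausdorffKer G) '' A) :
    x ∈ A := by
  obtain ⟨y, hyA, hyx⟩ := hx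
  have h : y⁻¹ * x ∈ hausdorffKer G := QuotientGroup.eq.mp hyx
  have h1 : y⁻¹ * x ∈ closure ({1} : Set G) := by
    simpa [hausdorffKer, Subgroup.topologicalClosure, Subgroup.coe_bot] using h
  have : x ∈ closure ({y} : Set G) := by
    have := (Homeomorph.mulLeft y).image_closure ({1} : Set G)
    have hmem : x ∈ (Homeomorph.mulLeft y) '' closure ({1} : Set G) :=
      ⟨y⁻¹ * x, h1, by simp⟩
    rw [this] at hmem
    simpa using hmem
  exact hA.closure_subset_iff.mpr (Set.singleton_subset_iff.mpr hyA) this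

/-- Compact sets in the quotient lift to compact sets. -/
lemma exists_compact_image_superset {G : Type*} [Group G] [TopologicalSpace G]
    [IsTopologicalGroup G] [LocallyCompactSpace G] {N : Subgroup G} [N.Normal]
    {L : Set (G ⧸ N)} (hL : IsCompact L) :
    ∃ K : Set G, IsCompact K ∧ L ⊆ (QuotientGroup.mk : G → G ⧸ N) '' K := by
  choose C hCc hCn using fun x : G => exists_compact_mem_nhds x
  have hcover : L ⊆ ⋃ x : G, (QuotientGroup.mk : G → G ⧸ N) '' interior (C x) := by
    rintro y hy
    obtain ⟨x, rfl⟩ := QuotientGroup.mk_surjective y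
    exact Set.mem_iUnion.2 ⟨x, ⟨x, mem_interior_iff_mem_nhds.2 (hCn x), rfl⟩⟩
  obtain ⟨t, ht⟩ := hL.elim_finite_subcover
    (fun x : G => (QuotientGroup.mk : G → G ⧸ N) '' interior (C x))
    (fun x => QuotientGroup.isOpenMap_coe _ isOpen_interior) hcover
  refine ⟨⋃ x ∈ t, C x, t.isCompact_biUnion (fun x _ => hCc x), ?_⟩
  intro y hy
  obtain ⟨x, hxt, z, hz, rfl⟩ := by simpa using ht hy
  exact ⟨z, Set.mem_biUnion hxt (interior_subset hz), rfl⟩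

/-- For closed subsets `A`, `B` of a locally compact group `G`, `(A, B)` is a terminal
pair of `G` with respect to `a` if and only if `(π A, π B)` is a terminal pair of the
Hausdorffication `G̃ = G / cl({e})` with respect to `π a`. -/
theorem isTerminalPair_iff_hausdorffication
    {G : Type*} [Group G] [TopologicalSpace G] [IsTopologicalGroup G] [LocallyCompactSpace G]
    (a : G) (A B : Set G) (hA : IsClosed A) (hB : IsClosed B) :
    IsTerminalPair a A B ↔
      IsTerminalPair (QuotientGroup.mk a : G ⧸ hausdorffKer G)
        ((QuotientGroup.mk : G → G ⧸ hausdorffKer G) '' A)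
        ((QuotientGroup.mk : G → G ⧸ hausdorffKer G) '' B) := by
  set π : G → G ⧸ hausdorffKer G := QuotientGroup.mk with hπ
  have hsatA : π ⁻¹' (π '' A) = A :=
    Set.Subset.antisymm (fun x hx => hausdorff_saturated hA hx) (Set.subset_preimage_image _ _)
  have hsatB : π ⁻¹' (π '' B) = B :=
    Set.Subset.antisymm (fun x hx => hausdorff_saturated hB hx) (Set.subset_preimage_image _ _)
  have hqm : Topology.IsQuotientMap π := QuotientGroup.isOpenQuotientMap_mk.isQuotientMap
  have hclA : IsClosed (π '' A) := by
    rw [← hqm.isClosed_preimage, hsatA]; exact hA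
  have hclB : IsClosed (π '' B) := by
    rw [← hqm.isClosed_preimage, hsatB]; exact hB
  constructor
  · rintro ⟨_, _, hdisj, hterm⟩
    refine ⟨hclA, hclB, ?_, ?_⟩
    · rw [Set.disjoint_left]
      rintro y hyA hyB
      obtain ⟨x, hxA, rfl⟩ := hyA
      exact Set.disjoint_left.mp hdisj hxA (hausdorff_saturated hB hyB)
    · intro L hL
      obtain ⟨K, hKc, hKL⟩ := exists_compact_image_superset hL
      obtain ⟨N, hN⟩ := hterm K hKc
      refine ⟨N, fun n hn y hy => ?_⟩
      obtain ⟨x, hxK, rfl⟩ := hKL hy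
      obtain ⟨h1, h2⟩ := hN n hn x hxK
      constructor
      · exact ⟨x * a ^ n, h1, by simp [hπ, QuotientGroup.mk_mul, QuotientGroup.mk_pow]⟩
      · exact ⟨x * a ^ (-(n : ℤ)), h2, by simp [hπ, QuotientGroup.mk_mul, QuotientGroup.mk_zpow]⟩
  · rintro ⟨_, _, hdisj, hterm⟩
    refine ⟨hA, hB, ?_, ?_⟩
    · rw [Set.disjoint_left]
      intro x hxA hxB
      exact Set.disjoint_left.mp hdisj ⟨x, hxA, rfl⟩ ⟨x, hxB, rfl⟩
    · intro K hK
      obtain ⟨N, hN⟩ := hterm (π '' K) (hK.image QuotientGroup.continuous_mk)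
      refine ⟨N, fun n hn x hx => ?_⟩
      obtain ⟨h1, h2⟩ := hN n hn (π x) ⟨x, hx, rfl⟩
      constructor
      · refine hausdorff_saturated hA ?_
        simpa [hπ, QuotientGroup.mk_mul, QuotientGroup.mk_pow] using h1
      · refine hausdorff_saturated hB ?_
        simpa [hπ, QuotientGroup.mk_mul, QuotientGroup.mk_zpow] using h2
end

section
/- Let G be a second countable locally compact Hausdorff topological group, and let d be a metric on G inducing the topology of G that is right-invariant (d(xg, yg) = d(x,y) for all x, y, g ∈ G) and proper (closed bounded sets are compact). Then for a ∈ G the following are equivalent: (1) a is an aperiodic element of G; (2) for all compact subsets K and K' of G, the distance d(Ka^ℓ, K') := inf{d(x,y) : x ∈ Ka^ℓ, y ∈ K'} tends to infinity as ℓ → ∞. -/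
/-- Let `G` be a second countable locally compact Hausdorff group and `d` a proper
right-invariant metric inducing the topology of `G`.  Then `a` is aperiodic if and only
if `d(K a^ℓ, K') → ∞` as `ℓ → ∞` for all compact sets `K`, `K'`. -/
theorem isAperiodic_iff_dist_tendsto_atTop
    {G : Type*} [Group G] [TopologicalSpace G] [IsTopologicalGroup G]
    [LocallyCompactSpace G] [T2Space G] [SecondCountableTopology G]
    (d : G → G → ℝ)
    (d_self : ∀ x y : G, d x y = 0 ↔ x = y)
    (d_symm : ∀ x y : G, d x y = d y x)
    (d_triangle : ∀ x y z : G, d x z ≤ d x y + d y z)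
    (d_topology : ∀ s : Set G, IsOpen s ↔ ∀ x ∈ s, ∃ ε > 0, {y : G | d x y < ε} ⊆ s)
    (d_rightInvariant : ∀ x y g : G, d (x * g) (y * g) = d x y)
    (d_proper : ∀ s : Set G, IsClosed s → (∃ x : G, ∃ C : ℝ, ∀ y ∈ s, d x y ≤ C) →
      IsCompact s)
    (a : G) :
    IsAperiodic a ↔
      ∀ K K' : Set G, IsCompact K → IsCompact K' → ∀ C : ℝ, ∃ L : ℕ, ∀ ℓ : ℕ, L ≤ ℓ →
        ∀ x ∈ K, ∀ y ∈ K', C < d (x * a ^ ℓ) y := by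
  -- Basic metric facts
  have hd0 : ∀ x : G, d x x = 0 := fun x => (d_self x x).mpr rfl
  have hpos : ∀ x y : G, 0 ≤ d x y := by
    intro x y
    have h1 := d_triangle x y x
    rw [hd0 x, d_symm y x] at h1
    linarith
  have hball_open : ∀ (c : G) (ε : ℝ), IsOpen {y : G | d c y < ε} := by
    intro c ε
    rw [d_topology]
    intro x hx
    simp only [Set.mem_setOf_eq] at hx
    refine ⟨ε - d c x, by linarith, ?_⟩
    intro y hy
    simp only [Set.mem_setOf_eq] at hy ⊢
    have := d_triangle c x y
    linarith
  have hcball_closed : ∀ (c : G) (R : ℝ), IsClosed {y : G | d c y ≤ R} := by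
    intro c R
    rw [← isOpen_compl_iff, d_topology]
    intro x hx
    simp only [Set.mem_compl_iff, Set.mem_setOf_eq, not_le] at hx
    refine ⟨d c x - R, by linarith, ?_⟩
    intro y hy
    simp only [Set.mem_setOf_eq] at hy
    simp only [Set.mem_compl_iff, Set.mem_setOf_eq, not_le]
    have h1 := d_triangle c y x
    have h2 := d_symm x y
    linarith
  have hcball_cpt : ∀ R : ℝ, IsCompact {y : G | d 1 y ≤ R} :=
    fun R => d_proper _ (hcball_closed 1 R) ⟨1, R, fun _ hy => hy⟩
  have hbdd : ∀ s : Set G, IsCompact s → ∃ M : ℝ, ∀ y ∈ s, d 1 y ≤ M := by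
    intro s hs
    have hcover : s ⊆ ⋃ n : ℕ, {y : G | d 1 y < n} := by
      intro y _
      obtain ⟨n, hn⟩ := exists_nat_gt (d 1 y)
      simp only [Set.mem_iUnion, Set.mem_setOf_eq]
      exact ⟨n, hn⟩
    obtain ⟨F, hF⟩ := hs.elim_finite_subcover (fun n : ℕ => {y : G | d 1 y < n})
      (fun n => hball_open 1 n) hcover
    refine ⟨(F.sup id : ℕ), ?_⟩
    intro y hy
    have hmem := hF hy
    simp only [Set.mem_iUnion] at hmem
    obtain ⟨n, hnF, hn⟩ := hmem
    simp only [Set.mem_setOf_eq] at hn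
    have hle : (n : ℝ) ≤ ((F.sup id : ℕ) : ℝ) := by
      exact_mod_cast Finset.le_sup (f := id) hnF
    linarith
  constructor
  · -- hard direction
    intro hap K K' hK hK' C
    by_contra hcon
    push_neg at hcon
    -- hcon : ∀ L, ∃ ℓ, L ≤ ℓ ∧ ∃ x ∈ K, ∃ y ∈ K', d (x * a ^ ℓ) y ≤ C
    exfalso
    apply hap
    -- Step 1: a bound M with returns of a^ℓ into the ball of radius M at arbitrarily
    -- large times ℓ.
    obtain ⟨M, hunb⟩ : ∃ M : ℝ, ∀ L : ℕ, ∃ ℓ, L ≤ ℓ ∧ d 1 (a ^ ℓ) ≤ M := by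
      have hQcpt : IsCompact ((fun p : G × G × G => p.1⁻¹ * (p.2.1 * p.2.2)) ''
          (K ×ˢ ({y : G | d 1 y ≤ max C 0} ×ˢ K'))) := by
        apply IsCompact.image (hK.prod ((hcball_cpt (max C 0)).prod hK'))
        exact (continuous_fst.inv).mul
          ((continuous_fst.comp continuous_snd).mul (continuous_snd.comp continuous_snd))
      obtain ⟨M, hM⟩ := hbdd _ hQcpt
      refine ⟨M, fun L => ?_⟩
      obtain ⟨ℓ, hLℓ, x, hx, y, hy, hdle⟩ := hcon L
      refine ⟨ℓ, hLℓ, ?_⟩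
      have hmid : (x * a ^ ℓ * y⁻¹) ∈ {y : G | d 1 y ≤ max C 0} := by
        have h1 := d_rightInvariant 1 (x * a ^ ℓ * y⁻¹) y
        rw [one_mul, inv_mul_cancel_right] at h1
        -- h1 : d y (x * a ^ ℓ) = d 1 (x * a ^ ℓ * y⁻¹)
        simp only [Set.mem_setOf_eq]
        rw [← h1, d_symm y (x * a ^ ℓ)]
        exact le_trans hdle (le_max_left _ _)
      apply hM
      refine ⟨(x, (x * a ^ ℓ * y⁻¹, y)), ⟨hx, hmid, hy⟩, ?_⟩
      group
    -- Step 2: (★) arbitrarily large almost-returns to the identity.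
    have star : ∀ ε : ℝ, 0 < ε → ∀ N : ℕ, ∃ m, N ≤ m ∧ d 1 (a ^ m) < ε := by
      intro ε hε N
      have hBcpt : IsCompact {y : G | d 1 y ≤ M} := hcball_cpt M
      have hBcover : {y : G | d 1 y ≤ M} ⊆
          ⋃ q : {y : G | d 1 y ≤ M}, {y : G | d (q : G) y < ε / 2} := by
        intro y hy
        simp only [Set.mem_iUnion]
        refine ⟨⟨y, hy⟩, ?_⟩
        simp only [Set.mem_setOf_eq, hd0]
        linarith
      obtain ⟨F, hF⟩ := hBcpt.elim_finite_subcover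
        (fun q : {y : G | d 1 y ≤ M} => {y : G | d (q : G) y < ε / 2})
        (fun q => hball_open _ _) hBcover
      set T : Set ℕ := {ℓ : ℕ | d 1 (a ^ ℓ) ≤ M} with hTdef
      have hTinf : T.Infinite := by
        intro hfin
        obtain ⟨b, hb⟩ := hfin.bddAbove
        obtain ⟨ℓ, hℓ1, hℓ2⟩ := hunb (b + 1)
        have : ℓ ≤ b := hb hℓ2
        omega
      have hsub : T ⊆ ⋃ i ∈ F, {ℓ : ℕ | ℓ ∈ T ∧ d ((i : G)) (a ^ ℓ) < ε / 2} := by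
        intro ℓ hℓ
        have hin : (a ^ ℓ : G) ∈ {y : G | d 1 y ≤ M} := hℓ
        have hmem := hF hin
        simp only [Set.mem_iUnion] at hmem ⊢
        obtain ⟨i, hiF, hi⟩ := hmem
        exact ⟨i, hiF, hℓ, hi⟩
      have hex : ∃ i ∈ F, {ℓ : ℕ | ℓ ∈ T ∧ d ((i : G)) (a ^ ℓ) < ε / 2}.Infinite := by
        by_contra hall
        push_neg at hall
        exact hTinf (Set.Finite.subset (Set.Finite.biUnion F.finite_toSet
          (fun i hi => hall i hi)) hsub)
      obtain ⟨i, _, hiInf⟩ := hex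
      have hget : ∀ n : ℕ, ∃ t, (t ∈ T ∧ d ((i : G)) (a ^ t) < ε / 2) ∧ n ≤ t := by
        intro n
        by_contra hno
        push_neg at hno
        apply hiInf
        apply Set.Finite.subset (Set.finite_Iio n)
        intro x hx
        exact hno x hx
      obtain ⟨t, ht, _⟩ := hget 0
      obtain ⟨t', ht', htt'⟩ := hget (t + N)
      refine ⟨t' - t, by omega, ?_⟩
      have hsum : a ^ (t' - t) * a ^ t = a ^ t' := by
        rw [← pow_add]
        congr 1
        omega
      have h1 : d 1 (a ^ (t' - t)) = d (a ^ t) (a ^ t') := by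
        have h := d_rightInvariant 1 (a ^ (t' - t)) (a ^ t)
        rw [one_mul, hsum] at h
        exact h.symm
      have h2 := d_triangle (a ^ t) ((i : G)) (a ^ t')
      have h3 := d_symm ((i : G)) (a ^ t)
      have h4 := ht.2
      have h5 := ht'.2
      rw [h1]
      linarith
    -- Step 3: the closure of the powers of `a` is bounded, hence compact.
    set Hs : Set G := closure (Subgroup.zpowers a : Set G) with hHdef
    have hHclosed : IsClosed Hs := isClosed_closure
    have hpowH : ∀ m : ℕ, (a ^ m : G) ∈ Hs :=
      fun m => subset_closure (Subgroup.pow_mem _ (Subgroup.mem_zpowers a) m)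
    have hmulH : ∀ x ∈ Hs, ∀ y ∈ Hs, x * y ∈ Hs := by
      intro x hx y hy
      exact Subgroup.mul_mem (Subgroup.zpowers a).topologicalClosure hx hy
    have hinvH : ∀ x ∈ Hs, x⁻¹ ∈ Hs := by
      intro x hx
      exact Subgroup.inv_mem (Subgroup.zpowers a).topologicalClosure hx
    -- the positive powers come within distance 1 of every point of Hs
    have cov : ∀ x ∈ Hs, ∃ m : ℕ, d x (a ^ m) < 1 := by
      intro x hx
      obtain ⟨z, hz1, hz2⟩ := mem_closure_iff.mp hx {y : G | d x y < 1 / 2}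
        (hball_open x (1 / 2)) (by simp only [Set.mem_setOf_eq, hd0]; norm_num)
      simp only [Set.mem_setOf_eq] at hz1
      rw [SetLike.mem_coe, Subgroup.mem_zpowers_iff] at hz2
      obtain ⟨k, hk⟩ := hz2
      rcases le_or_gt 0 k with hk0 | hk0
      · refine ⟨k.toNat, ?_⟩
        have he : (a : G) ^ (k.toNat) = a ^ k := by
          rw [← zpow_natCast]
          congr 1
          omega
        rw [he, hk]
        linarith
      · obtain ⟨m, hm1, hm2⟩ := star (1 / 2) (by norm_num) (-k).toNat
        have hkm : (0 : ℤ) ≤ k + m := by omega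
        refine ⟨(k + m).toNat, ?_⟩
        have he : (a : G) ^ ((k + m).toNat) = a ^ (k + (m : ℤ)) := by
          rw [← zpow_natCast]
          congr 1
          omega
        have hstep : d (a ^ k : G) ((a : G) ^ ((k + m).toNat)) = d 1 (a ^ m) := by
          have h := d_rightInvariant 1 ((a : G) ^ (m : ℤ)) (a ^ k)
          rw [one_mul, ← zpow_add, add_comm (m : ℤ) k] at h
          rw [he, h, zpow_natCast]
        have htr := d_triangle x (a ^ k : G) ((a : G) ^ ((k + m).toNat))
        rw [hstep, hk] at htr
        linarith
    -- the compact "unit ball" piece of Hs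
    set Cs : Set G := {y : G | d 1 y ≤ 1} ∩ Hs with hCdef
    have hCcpt : IsCompact Cs :=
      d_proper _ ((hcball_closed 1 1).inter hHclosed) ⟨1, 1, fun y hy => hy.1⟩
    set CC : Set G := (fun p : G × G => p.1 * p.2) '' (Cs ×ˢ Cs) with hCCdef
    have hCCcpt : IsCompact CC := (hCcpt.prod hCcpt).image continuous_mul
    have hCCH : CC ⊆ Hs := by
      rintro _ ⟨⟨u, v⟩, ⟨hu, hv⟩, rfl⟩
      exact hmulH u hu.2 v hv.2
    have hUopen : ∀ m : ℕ, IsOpen {y : G | d y (a ^ m) < 1} := by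
      intro m
      have he : {y : G | d y (a ^ m) < 1} = {y : G | d (a ^ m) y < 1} := by
        ext y
        simp only [Set.mem_setOf_eq]
        rw [d_symm]
      rw [he]
      exact hball_open _ _
    have hCCcover : CC ⊆ ⋃ m : ℕ, {y : G | d y (a ^ m) < 1} := by
      intro z hz
      obtain ⟨m, hm⟩ := cov z (hCCH hz)
      simp only [Set.mem_iUnion, Set.mem_setOf_eq]
      exact ⟨m, hm⟩
    obtain ⟨F2, hF2⟩ := hCCcpt.elim_finite_subcover
      (fun m : ℕ => {y : G | d y (a ^ m) < 1}) hUopen hCCcover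
    set M1 : ℕ := F2.sup id with hM1def
    obtain ⟨nstar, hnstar1, hnstar2⟩ := star 1 one_pos (M1 + 1)
    have hc : 0 ≤ d 1 a := hpos 1 a
    have powb : ∀ m : ℕ, d 1 (a ^ m) ≤ m * d 1 a := by
      intro m
      induction m with
      | zero => simp [hd0]
      | succ n ih =>
        have hstep : d (a ^ n : G) (a ^ (n + 1)) = d 1 a := by
          have h := d_rightInvariant 1 a (a ^ n)
          rw [one_mul, ← pow_succ'] at h
          exact h
        have htr := d_triangle 1 (a ^ n : G) (a ^ (n + 1))
        rw [hstep] at htr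
        push_cast
        linarith
    set Rb : ℝ := 1 + (nstar : ℝ) * d 1 a with hRbdef
    have main : ∀ m : ℕ, ∀ x, x ∈ Hs → d x (a ^ m) < 1 → d 1 x ≤ Rb := by
      intro m
      induction m using Nat.strong_induction_on with
      | _ m IH =>
        intro x hxH hxm
        by_cases hm : m ≤ nstar
        · have h1 := d_triangle 1 (a ^ m : G) x
          have h2 := powb m
          have h3 := d_symm (a ^ m : G) x
          have h4 : (m : ℝ) * d 1 a ≤ (nstar : ℝ) * d 1 a := by
            apply mul_le_mul_of_nonneg_right _ hc
            exact_mod_cast hm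
          rw [hRbdef]
          linarith
        · push_neg at hm
          have hvH : x * (a ^ m)⁻¹ ∈ Hs := hmulH x hxH _ (hinvH _ (hpowH m))
          have hv1 : d 1 (x * (a ^ m)⁻¹) ≤ 1 := by
            have h := d_rightInvariant 1 (x * (a ^ m)⁻¹) (a ^ m)
            rw [one_mul, inv_mul_cancel_right] at h
            -- h : d (a ^ m) x = d 1 (x * (a ^ m)⁻¹)
            rw [← h, d_symm (a ^ m : G) x]
            linarith
          have hvC : x * (a ^ m)⁻¹ ∈ Cs := ⟨hv1, hvH⟩
          have haC : (a ^ nstar : G) ∈ Cs := ⟨le_of_lt hnstar2, hpowH nstar⟩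
          have hwCC : (x * (a ^ m)⁻¹) * a ^ nstar ∈ CC :=
            ⟨(x * (a ^ m)⁻¹, a ^ nstar), ⟨hvC, haC⟩, rfl⟩
          have hmem := hF2 hwCC
          simp only [Set.mem_iUnion, Set.mem_setOf_eq] at hmem
          obtain ⟨j, hjF, hj⟩ := hmem
          have hjM : j ≤ M1 := Finset.le_sup (f := id) hjF
          have hm'm : m - nstar + j < m := by omega
          have hx' : d x (a ^ (m - nstar + j)) < 1 := by
            have hinv := d_rightInvariant ((x * (a ^ m)⁻¹) * a ^ nstar) (a ^ j)
              (a ^ (m - nstar))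
            have e1 : (x * (a ^ m)⁻¹) * a ^ nstar * a ^ (m - nstar) = x := by
              rw [mul_assoc (x * (a ^ m)⁻¹), ← pow_add]
              have he : nstar + (m - nstar) = m := by omega
              rw [he, inv_mul_cancel_right]
            have e2 : (a : G) ^ j * a ^ (m - nstar) = a ^ (m - nstar + j) := by
              rw [← pow_add]
              congr 1
              omega
            rw [e1, e2] at hinv
            rw [← hinv] at hj
            exact hj
          exact IH _ hm'm x hxH hx'
    have hHb : ∀ x ∈ Hs, d 1 x ≤ Rb := by
      intro x hx
      obtain ⟨m, hm⟩ := cov x hx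
      exact main m x hx hm
    exact d_proper _ hHclosed ⟨1, Rb, hHb⟩
  · -- easy direction
    intro hR hcpt
    obtain ⟨L, hL⟩ := hR {1} (closure (Subgroup.zpowers a : Set G))
      isCompact_singleton hcpt 0
    have h1 : (a ^ L : G) ∈ closure (Subgroup.zpowers a : Set G) :=
      subset_closure (Subgroup.pow_mem _ (Subgroup.mem_zpowers a) L)
    have h2 := hL L le_rfl 1 (Set.mem_singleton 1) (a ^ L) h1
    rw [one_mul, hd0] at h2
    exact lt_irrefl 0 h2
end

section
/- Let G be a second countable locally compact topological group and a ∈ G. The following are equivalent: (1) a is an aperiodic element of G; (2) for every compact subset K of G there exists N ∈ ℕ such that K ∩ Ka^n = ∅ for all n > N; (3) G admits a terminal pair with respect to a. -/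
open Filter Topology Set Pointwise

set_option linter.unusedSectionVars false
set_option maxHeartbeats 1000000

namespace AperiodicAux

variable {G : Type*} [Group G] [TopologicalSpace G] [IsTopologicalGroup G]

/-- Two-variable splitting of a neighborhood of `1`. -/
lemma split2 {φ : G → G → G} (hφ : Continuous fun p : G × G => φ p.1 p.2) (h1 : φ 1 1 = 1)
    {U : Set G} (hU : U ∈ 𝓝 (1 : G)) :
    ∃ V : Set G, IsOpen V ∧ (1 : G) ∈ V ∧ ∀ v ∈ V, ∀ w ∈ V, φ v w ∈ U := by
  have hc : (fun p : G × G => φ p.1 p.2) ⁻¹' U ∈ 𝓝 ((1 : G), (1 : G)) := by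
    refine hφ.continuousAt.preimage_mem_nhds ?_
    simpa [h1] using hU
  rcases mem_nhds_prod_iff.mp hc with ⟨s, hs, t, ht, hst⟩
  refine ⟨interior s ∩ interior t, isOpen_interior.inter isOpen_interior,
    ⟨mem_interior_iff_mem_nhds.2 hs, mem_interior_iff_mem_nhds.2 ht⟩, ?_⟩
  intro v hv w hw
  exact hst (⟨interior_subset hv.1, interior_subset hw.2⟩ : (v, w) ∈ s ×ˢ t)

/-- If powers of `a` return to a compact set at arbitrarily large times, there is a point
`c` such that every neighborhood of `c` is visited at arbitrarily large times. -/
lemma rec0 (a : G) {C : Set G} (hC : IsCompact C)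
    (h : ∀ N : ℕ, ∃ n, N ≤ n ∧ a ^ n ∈ C) :
    ∃ c ∈ C, ∀ O : Set G, IsOpen O → c ∈ O → ∀ N : ℕ, ∃ n, N ≤ n ∧ a ^ n ∈ O := by
  by_contra hcon
  push_neg at hcon
  choose O hOopen hmem N hN using hcon
  obtain ⟨t, ht⟩ := hC.elim_finite_subcover (fun i : C => O i i.2) (fun i => hOopen i i.2)
    (fun x hx => mem_iUnion.2 ⟨⟨x, hx⟩, hmem x hx⟩)
  obtain ⟨n, hn, hnC⟩ := h (t.sup fun i => N i i.2)
  obtain ⟨i, hit, hiO⟩ := mem_iUnion₂.1 (ht hnC)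
  exact hN i i.2 n (le_trans (Finset.le_sup (f := fun i : C => N i i.2) hit) hn) hiO

/-- Recurrence: returns to a compact set at arbitrarily large times force returns to every
neighborhood of `1` at arbitrarily large (positive) times. -/
lemma rec1 (a : G) {C : Set G} (hC : IsCompact C)
    (h : ∀ N : ℕ, ∃ n, N ≤ n ∧ a ^ n ∈ C) :
    ∀ U ∈ 𝓝 (1 : G), ∀ N : ℕ, ∃ n, N ≤ n ∧ 1 ≤ n ∧ a ^ n ∈ U := by
  obtain ⟨c, _, hc⟩ := rec0 a hC h
  intro U hU N
  obtain ⟨V, hVo, hV1, hV⟩ := split2 (φ := fun v w => v⁻¹ * w)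
    (by fun_prop) (by simp) hU
  have hOopen : IsOpen ((fun x => c⁻¹ * x) ⁻¹' V) := hVo.preimage (by fun_prop)
  have hcO : c ∈ (fun x => c⁻¹ * x) ⁻¹' V := by simp [hV1]
  obtain ⟨n₁, -, h1⟩ := hc _ hOopen hcO 0
  obtain ⟨n₂, hn₂, h2⟩ := hc _ hOopen hcO (n₁ + max N 1)
  refine ⟨n₂ - n₁, by omega, by omega, ?_⟩
  have key : a ^ (n₂ - n₁) = (c⁻¹ * a ^ n₁)⁻¹ * (c⁻¹ * a ^ n₂) := by
    have h3 : a ^ n₁ * a ^ (n₂ - n₁) = a ^ n₂ := by rw [← pow_add]; congr 1; omega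
    rw [← h3]; group
  rw [key]
  exact hV _ h1 _ h2

/-- Any point of the closed subgroup generated by `a` is approximated both by positive
powers and by negative powers of `a`. -/
lemma approx (a : G)
    (hrec : ∀ U ∈ 𝓝 (1 : G), ∀ N : ℕ, ∃ n, N ≤ n ∧ 1 ≤ n ∧ a ^ n ∈ U)
    {x : G} (hx : x ∈ closure (Subgroup.zpowers a : Set G))
    {O : Set G} (hOo : IsOpen O) (hxO : x ∈ O) :
    (∃ n : ℕ, 1 ≤ n ∧ a ^ n ∈ O) ∧ (∃ m : ℕ, 1 ≤ m ∧ a ^ (-(m : ℤ)) ∈ O) := by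
  have hQ : (fun y => x * y) ⁻¹' O ∈ 𝓝 (1 : G) := by
    refine (continuous_mul_left x).continuousAt.preimage_mem_nhds ?_
    simpa using hOo.mem_nhds hxO
  obtain ⟨V, hVo, hV1, hV⟩ := split2 (φ := fun v w => v * w) continuous_mul (one_mul 1) hQ
  have hopen : IsOpen ((fun y => x * y) '' V) := (Homeomorph.mulLeft x).isOpen_image.mpr hVo
  obtain ⟨g, hgV, hgz⟩ := mem_closure_iff.mp hx _ hopen ⟨1, hV1, mul_one x⟩
  obtain ⟨v, hvV, hvg⟩ := hgV
  obtain ⟨k, hk⟩ := Subgroup.mem_zpowers_iff.mp hgz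
  constructor
  · obtain ⟨p, hpk, hp1, hpV⟩ := hrec V (hVo.mem_nhds hV1) (k.natAbs + 1)
    refine ⟨(k + (p : ℤ)).toNat, by omega, ?_⟩
    have heq : a ^ ((k + (p : ℤ)).toNat) = x * (v * a ^ p) := by
      have h1 : (((k + (p : ℤ)).toNat : ℤ)) = k + (p : ℤ) := Int.toNat_of_nonneg (by omega)
      calc a ^ ((k + (p : ℤ)).toNat) = a ^ (((k + (p : ℤ)).toNat : ℤ)) := (zpow_natCast a _).symm
        _ = a ^ (k + (p : ℤ)) := by rw [h1]
        _ = a ^ k * a ^ ((p : ℤ)) := zpow_add a k p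
        _ = g * a ^ p := by rw [hk, zpow_natCast]
        _ = x * (v * a ^ p) := by rw [← hvg, mul_assoc]
    rw [heq]
    exact hV v hvV (a ^ p) hpV
  · obtain ⟨q, hqk, hq1, hqV⟩ := hrec V⁻¹ ((hVo.inv).mem_nhds (by simpa using hV1)) (k.natAbs + 1)
    refine ⟨((q : ℤ) - k).toNat, by omega, ?_⟩
    have heq : a ^ (-((((q : ℤ) - k).toNat : ℤ))) = x * (v * (a ^ q)⁻¹) := by
      have h1 : ((((q : ℤ) - k).toNat : ℤ)) = (q : ℤ) - k := Int.toNat_of_nonneg (by omega)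
      calc a ^ (-((((q : ℤ) - k).toNat : ℤ))) = a ^ (k - (q : ℤ)) := by rw [h1]; ring_nf
        _ = a ^ k * a ^ (-(q : ℤ)) := by rw [← zpow_add]; ring_nf
        _ = g * (a ^ q)⁻¹ := by rw [hk, zpow_neg, zpow_natCast]
        _ = x * (v * (a ^ q)⁻¹) := by rw [← hvg, mul_assoc]
    rw [heq]
    exact hV v hvV ((a ^ q)⁻¹) (Set.mem_inv.mp hqV)

lemma lemW [LocallyCompactSpace G] (a : G) {C : Set G} (hC : IsCompact C)
    (h : ∀ N : ℕ, ∃ n, N ≤ n ∧ a ^ n ∈ C) :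
    IsCompact (closure (Subgroup.zpowers a : Set G)) := by
  have hrec := rec1 a hC h
  obtain ⟨U₀, hU₀c, hU₀⟩ := exists_compact_mem_nhds (1 : G)
  set H : Set G := closure (Subgroup.zpowers a : Set G) with hHdef
  have hHc : IsClosed H := isClosed_closure
  have hH_eq : H = ((Subgroup.zpowers a).topologicalClosure : Set G) := by
    rw [Subgroup.topologicalClosure_coe]
  have hmulH : ∀ {y z : G}, y ∈ H → z ∈ H → y * z ∈ H := by
    intro y z hy hz
    rw [hH_eq] at hy hz ⊢
    exact mul_mem hy hz
  have hinvH : ∀ {y : G}, y ∈ H → y⁻¹ ∈ H := by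
    intro y hy
    rw [hH_eq] at hy ⊢
    exact inv_mem hy
  have hpowH : ∀ k : ℤ, a ^ k ∈ H := by
    intro k
    exact subset_closure (SetLike.mem_coe.mpr (Subgroup.zpow_mem _ (Subgroup.mem_zpowers a) k))
  have h1H : (1 : G) ∈ H := subset_closure (SetLike.mem_coe.mpr (one_mem _))
  -- the compact neighbourhood intersected with H
  set V' : Set G := U₀ ∩ H with hV'def
  have hV'c : IsCompact V' := hU₀c.inter_right hHc
  -- the open symmetric "error" set
  set W : Set G := interior U₀ ∩ (interior U₀)⁻¹ with hWdef
  have hWo : IsOpen W := isOpen_interior.inter isOpen_interior.inv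
  have hW1 : (1 : G) ∈ W := by
    constructor
    · exact mem_interior_iff_mem_nhds.2 hU₀
    · simpa using mem_interior_iff_mem_nhds.2 hU₀
  have hWU₀ : W ⊆ U₀ := fun y hy => interior_subset hy.1
  -- covering of V' by forward translates of W
  have hcov : V' ⊆ ⋃ k : ℕ, (fun y => (a ^ (k + 1))⁻¹ * y) ⁻¹' W := by
    intro x hx
    have hxH : x ∈ H := hx.2
    have hOo : IsOpen ((fun y : G => y⁻¹ * x) ⁻¹' W) := hWo.preimage (by fun_prop)
    have hxO : x ∈ (fun y : G => y⁻¹ * x) ⁻¹' W := by simp [hW1]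
    obtain ⟨n, hn1, hnW⟩ := (approx a hrec hxH hOo hxO).1
    refine mem_iUnion.2 ⟨n - 1, ?_⟩
    have : n - 1 + 1 = n := by omega
    simpa [this] using hnW
  obtain ⟨t, ht⟩ := hV'c.elim_finite_subcover
    (fun k : ℕ => (fun y => (a ^ (k + 1))⁻¹ * y) ⁻¹' W)
    (fun k => hWo.preimage (by fun_prop)) hcov
  set N : ℕ := t.sup id + 1 with hNdef
  -- the candidate compact set
  set D : Set G := ⋃ j : Fin (N + 1), (fun y => a ^ (j : ℕ) * y) '' V' with hDdef
  have hDc : IsCompact D := isCompact_iUnion fun j => hV'c.image (continuous_mul_left _)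
  have hDmem : ∀ (j : ℕ), j ≤ N → ∀ {w : G}, w ∈ V' → a ^ j * w ∈ D := by
    intro j hj w hw
    exact mem_iUnion.2 ⟨⟨j, by omega⟩, ⟨w, hw, rfl⟩⟩
  -- main induction: all backward translates of V' lie in D
  have main : ∀ m : ℕ, ∀ v ∈ V', a ^ (-(m : ℤ)) * v ∈ D := by
    intro m
    induction m using Nat.strong_induction_on with
    | _ m IH =>
      intro v hv
      rcases Nat.eq_zero_or_pos m with hm | hm
      · subst hm
        simpa using hDmem 0 (by omega) hv
      · obtain ⟨k, hkt, hk⟩ := mem_iUnion₂.1 (ht hv)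
        set n : ℕ := k + 1 with hndef
        have hnN : n ≤ N := by
          have : k ≤ t.sup id := Finset.le_sup (f := id) hkt
          omega
        have hwW : (a ^ n)⁻¹ * v ∈ W := hk
        set w : G := (a ^ n)⁻¹ * v with hwdef
        have hwH : w ∈ H := hmulH (hinvH (by simpa using hpowH (n : ℤ))) hv.2
        have hwV' : w ∈ V' := ⟨hWU₀ hwW, hwH⟩
        have hsplit : a ^ (-(m : ℤ)) * v = a ^ ((n : ℤ) - (m : ℤ)) * w := by
          rw [hwdef, ← mul_assoc]
          congr 1
          rw [← zpow_natCast a n, ← zpow_neg, ← zpow_add]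
          congr 1
          ring
        by_cases hmn : m ≤ n
        · have hcast : ((n : ℤ) - (m : ℤ)) = ((n - m : ℕ) : ℤ) := by omega
          have : a ^ (-(m : ℤ)) * v = a ^ (n - m : ℕ) * w := by
            rw [hsplit, hcast, zpow_natCast]
          rw [this]
          exact hDmem (n - m) (by omega) hwV'
        · have hcast : ((n : ℤ) - (m : ℤ)) = -(((m - n : ℕ) : ℤ)) := by omega
          have : a ^ (-(m : ℤ)) * v = a ^ (-((m - n : ℕ) : ℤ)) * w := by
            rw [hsplit, hcast]
          rw [this]
          exact IH (m - n) (by omega) w hwV'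
  -- negative powers of a lie in D
  have negD : ∀ m : ℕ, a ^ (-(m : ℤ)) ∈ D := by
    intro m
    simpa using main m 1 ⟨mem_of_mem_nhds hU₀, h1H⟩
  -- H is contained in the closure of the set of negative powers
  have hHsub : H ⊆ closure {y : G | ∃ m : ℕ, 1 ≤ m ∧ y = a ^ (-(m : ℤ))} := by
    intro x hx
    rw [mem_closure_iff]
    intro O hOo hxO
    obtain ⟨m, hm1, hmO⟩ := (approx a hrec hx hOo hxO).2
    exact ⟨a ^ (-(m : ℤ)), hmO, ⟨m, hm1, rfl⟩⟩
  have hsubD : {y : G | ∃ m : ℕ, 1 ≤ m ∧ y = a ^ (-(m : ℤ))} ⊆ D := by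
    rintro y ⟨m, -, rfl⟩
    exact negD m
  exact IsCompact.of_isClosed_subset hDc.closure hHc
    (hHsub.trans (closure_mono hsubD))

/-- An aperiodic element escapes every compact set in positive powers. -/
lemma escape [LocallyCompactSpace G] {a : G} (ha : IsAperiodic a) {C : Set G}
    (hC : IsCompact C) : ∃ N : ℕ, ∀ n : ℕ, N ≤ n → a ^ n ∉ C := by
  by_contra hcon
  push_neg at hcon
  exact ha (lemW a hC hcon)

lemma escape2 [LocallyCompactSpace G] {a : G} (ha : IsAperiodic a) {C : Set G}
    (hC : IsCompact C) :
    ∃ N : ℕ, ∀ n : ℕ, N ≤ n → a ^ n ∉ C ∧ a ^ (-(n : ℤ)) ∉ C := by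
  obtain ⟨N₁, h₁⟩ := escape ha hC
  obtain ⟨N₂, h₂⟩ := escape ha hC.inv
  refine ⟨max N₁ N₂, fun n hn => ⟨h₁ n (le_trans (le_max_left _ _) hn), fun hmem => ?_⟩⟩
  refine h₂ n (le_trans (le_max_right _ _) hn) ?_
  rw [Set.mem_inv, ← zpow_natCast, ← zpow_neg]
  exact hmem

lemma exists_terminalPair [LocallyCompactSpace G] [SecondCountableTopology G] (a : G)
    (ha : IsAperiodic a) :
    ∃ A B : Set G, IsTerminalPair a A B := by
  let K := CompactExhaustion.choice G
  set K' : ℕ → Set G := fun i => closure (K i) with hK'def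
  have hK'c : ∀ i, IsCompact (K' i) := fun i => (K.isCompact i).closure
  have hK'cl : ∀ i, IsClosed (K' i) := fun _ => isClosed_closure
  have hK'mono : ∀ {i j}, i ≤ j → K' i ⊆ K' j := fun h => closure_mono (K.subset h)
  set C : ℕ → Set G := fun i => (K' i)⁻¹ * K' i with hCdef
  have hCc : ∀ i, IsCompact (C i) := fun i => ((hK'c i).inv).mul (hK'c i)
  choose N₀ hN₀ using fun i => escape2 ha (hCc i)
  set M : ℕ → ℕ := fun i => (Finset.range (i + 1)).sup N₀ with hMdef
  have hMN : ∀ i, N₀ i ≤ M i := fun i =>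
    Finset.le_sup (Finset.self_mem_range_succ i)
  have hMmono : ∀ {i j}, i ≤ j → M i ≤ M j := by
    intro i j hij
    exact Finset.sup_mono (Finset.range_subset_range.mpr (by omega))
  -- generic one-sided construction
  have generic : ∀ e : ℕ → G, (∀ i n, N₀ i ≤ n → e n ∉ C i) →
      IsClosed (⋃ i, ⋃ n, ⋃ (_ : M i ≤ n), (fun y => y * e n) '' K' i) := by
    intro e he
    set A : Set G := ⋃ i, ⋃ n, ⋃ (_ : M i ≤ n), (fun y => y * e n) '' K' i with hAdef
    have hS : ∀ j : ℕ,
        IsClosed (⋃ i ∈ Finset.range j, ⋃ n ∈ Finset.Ico (M i) (N₀ j),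
          (fun y => y * e n) '' K' i) := by
      intro j
      refine (Finset.range j).finite_toSet.isClosed_biUnion fun i _ => ?_
      refine (Finset.Ico (M i) (N₀ j)).finite_toSet.isClosed_biUnion fun n _ => ?_
      exact (Homeomorph.mulRight (e n)).isClosed_image.mpr (hK'cl i)
    have hAK : ∀ j : ℕ, A ∩ K' j ⊆
        ⋃ i ∈ Finset.range j, ⋃ n ∈ Finset.Ico (M i) (N₀ j), (fun y => y * e n) '' K' i := by
      intro j x hx
      obtain ⟨hxA, hxK⟩ := hx
      simp only [hAdef, mem_iUnion] at hxA
      obtain ⟨i, n, hMn, y, hyK, rfl⟩ := hxA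
      have hen : ∀ l, K' i ⊆ K' l → K' j ⊆ K' l → e n ∈ C l := by
        intro l h1 h2
        have : y⁻¹ * (y * e n) ∈ (K' l)⁻¹ * K' l :=
          Set.mul_mem_mul (Set.inv_mem_inv.mpr (h1 hyK)) (h2 hxK)
        simpa using this
      have hij : i < j := by
        by_contra hij
        push_neg at hij
        exact he i n (le_trans (hMN i) hMn)
          (hen i (fun _ h => h) (hK'mono hij))
      have hnN : n < N₀ j := by
        by_contra hn
        push_neg at hn
        exact he j n hn (hen j (hK'mono (le_of_lt hij)) (fun _ h => h))
      refine mem_iUnion₂.2 ⟨i, Finset.mem_range.mpr hij, ?_⟩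
      exact mem_iUnion₂.2 ⟨n, Finset.mem_Ico.mpr ⟨hMn, hnN⟩, ⟨y, hyK, rfl⟩⟩
    have hSA : ∀ j : ℕ,
        (⋃ i ∈ Finset.range j, ⋃ n ∈ Finset.Ico (M i) (N₀ j), (fun y => y * e n) '' K' i)
          ⊆ A := by
      intro j
      intro x hx
      obtain ⟨i, -, hx⟩ := mem_iUnion₂.1 hx
      obtain ⟨n, hn, hx⟩ := mem_iUnion₂.1 hx
      have hn' : M i ≤ n := (Finset.mem_Ico.mp hn).1
      simp only [hAdef, mem_iUnion]
      exact ⟨i, n, hn', hx⟩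
    refine isClosed_of_closure_subset fun x hx => ?_
    obtain ⟨jx, hjx⟩ := K.exists_mem x
    set j : ℕ := jx + 1 with hjdef
    have hxint : x ∈ interior (K j) := K.subset_interior_succ jx hjx
    have h1 : x ∈ closure (A ∩ interior (K j)) := by
      rw [mem_closure_iff] at hx ⊢
      intro O hOo hxO
      obtain ⟨z, hz, hzA⟩ := hx (O ∩ interior (K j)) (hOo.inter isOpen_interior) ⟨hxO, hxint⟩
      exact ⟨z, hz.1, hzA, hz.2⟩
    have h2 : closure (A ∩ interior (K j)) ⊆ closure (A ∩ K' j) :=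
      closure_mono (inter_subset_inter_right _ (interior_subset.trans subset_closure))
    have h3 : closure (A ∩ K' j) ⊆
        (⋃ i ∈ Finset.range j, ⋃ n ∈ Finset.Ico (M i) (N₀ j), (fun y => y * e n) '' K' i) := by
      rw [← IsClosed.closure_eq (hS j)]
      exact closure_mono (hAK j)
    exact hSA j (h3 (h2 h1))
  -- the two sets
  set A : Set G := ⋃ i, ⋃ n, ⋃ (_ : M i ≤ n), (fun y => y * a ^ n) '' K' i with hAdef
  set B : Set G := ⋃ i, ⋃ n, ⋃ (_ : M i ≤ n), (fun y => y * a ^ (-(n : ℤ))) '' K' i with hBdef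
  have hAclosed : IsClosed A := generic (fun n => a ^ n) (fun i n hn => (hN₀ i n hn).1)
  have hBclosed : IsClosed B := generic (fun n => a ^ (-(n : ℤ))) (fun i n hn => (hN₀ i n hn).2)
  have hdisj : Disjoint A B := by
    rw [Set.disjoint_left]
    rintro x hxA hxB
    simp only [hAdef, mem_iUnion] at hxA
    simp only [hBdef, mem_iUnion] at hxB
    obtain ⟨i, n, hin, y, hy, hyx⟩ := hxA
    obtain ⟨i', n', hin', y', hy', hy'x⟩ := hxB
    set l : ℕ := max i i' with hldef
    have h1 : y⁻¹ * y' = a ^ ((n : ℤ) + (n' : ℤ)) := by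
      have e0 : y' * a ^ (-(n' : ℤ)) = y * a ^ ((n : ℤ)) := by
        rw [zpow_natCast]
        exact hy'x.trans hyx.symm
      calc y⁻¹ * y' = y⁻¹ * ((y' * a ^ (-(n' : ℤ))) * a ^ ((n' : ℤ))) := by group
        _ = y⁻¹ * (y * a ^ ((n : ℤ)) * a ^ ((n' : ℤ))) := by rw [e0]
        _ = a ^ ((n : ℤ) + (n' : ℤ)) := by group
    have key : a ^ (n + n') ∈ C l := by
      have h2 : a ^ (n + n') = y⁻¹ * y' := by
        rw [h1, ← zpow_natCast a (n + n')]
        congr 1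
      rw [h2]
      exact Set.mul_mem_mul (Set.inv_mem_inv.mpr (hK'mono (le_max_left i i') hy))
        (hK'mono (le_max_right i i') hy')
    have hMl : M l ≤ n + n' := by
      rcases max_choice i i' with h | h
      · rw [hldef, h]; omega
      · rw [hldef, h]; omega
    exact (hN₀ l (n + n') (le_trans (hMN l) hMl)).1 key
  refine ⟨A, B, hAclosed, hBclosed, hdisj, ?_⟩
  intro Kc hKc
  obtain ⟨i, hi⟩ := K.exists_superset_of_isCompact hKc
  refine ⟨M i, fun n hn x hx => ⟨?_, ?_⟩⟩
  · simp only [hAdef, mem_iUnion]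
    exact ⟨i, n, hn, x, subset_closure (hi hx), rfl⟩
  · simp only [hBdef, mem_iUnion]
    exact ⟨i, n, hn, x, subset_closure (hi hx), rfl⟩

end AperiodicAux

/-- For a second countable locally compact group `G` and `a ∈ G`, the following are
equivalent: (1) `a` is aperiodic; (2) every compact set `K` satisfies `K ∩ K a^n = ∅` for
all large `n`; (3) `G` admits a terminal pair with respect to `a`. -/
theorem isAperiodic_tfae
    {G : Type*} [Group G] [TopologicalSpace G] [IsTopologicalGroup G]
    [LocallyCompactSpace G] [SecondCountableTopology G] (a : G) :
    (IsAperiodic a ↔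
      ∀ K : Set G, IsCompact K → ∃ N : ℕ, ∀ n : ℕ, N < n →
        K ∩ ((fun x => x * a ^ n) '' K) = ∅) ∧
    (IsAperiodic a ↔ ∃ A B : Set G, IsTerminalPair a A B) := by
  constructor
  · constructor
    · intro ha K hK
      obtain ⟨N, hN⟩ := AperiodicAux.escape ha (hK.inv.mul hK)
      refine ⟨N, fun n hn => ?_⟩
      rw [Set.eq_empty_iff_forall_notMem]
      rintro x ⟨hxK, y, hyK, hyx⟩
      refine hN n (le_of_lt hn) ?_
      have hmm : y⁻¹ * x ∈ K⁻¹ * K := Set.mul_mem_mul (Set.inv_mem_inv.mpr hyK) hxK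
      have heq : y⁻¹ * x = a ^ n := by
        rw [← hyx]
        group
      rwa [heq] at hmm
    · intro h2 hcomp
      obtain ⟨N, hN⟩ := h2 _ hcomp
      have h1K : (1 : G) ∈ closure (Subgroup.zpowers a : Set G) :=
        subset_closure (SetLike.mem_coe.mpr (one_mem _))
      have hmem : (1 : G) ∈ closure (Subgroup.zpowers a : Set G) ∩
          ((fun x => x * a ^ (N + 1)) '' closure (Subgroup.zpowers a : Set G)) := by
        refine ⟨h1K, ⟨a ^ (-(N + 1 : ℕ) : ℤ), ?_, ?_⟩⟩
        · exact subset_closure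
            (SetLike.mem_coe.mpr (Subgroup.zpow_mem _ (Subgroup.mem_zpowers a) _))
        · show a ^ (-((N + 1 : ℕ) : ℤ)) * a ^ (N + 1) = 1
          rw [← zpow_natCast a (N + 1), ← zpow_add, neg_add_cancel, zpow_zero]
      rw [hN (N + 1) (by omega)] at hmem
      exact hmem
  · constructor
    · exact fun ha => AperiodicAux.exists_terminalPair a ha
    · rintro ⟨A, B, hA, hB, hdisj, hterm⟩ hcomp
      obtain ⟨N, hN⟩ := hterm _ hcomp
      have hmem₁ : a ^ (-(N : ℤ)) ∈ closure (Subgroup.zpowers a : Set G) :=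
        subset_closure (SetLike.mem_coe.mpr (Subgroup.zpow_mem _ (Subgroup.mem_zpowers a) _))
      have hmem₂ : a ^ ((N : ℤ)) ∈ closure (Subgroup.zpowers a : Set G) :=
        subset_closure (SetLike.mem_coe.mpr (Subgroup.zpow_mem _ (Subgroup.mem_zpowers a) _))
      have h₁ := (hN N le_rfl _ hmem₁).1
      have h₂ := (hN N le_rfl _ hmem₂).2
      have e₁ : a ^ (-(N : ℤ)) * a ^ (N : ℕ) = 1 := by
        rw [← zpow_natCast a N, ← zpow_add]
        simp
      have e₂ : a ^ ((N : ℤ)) * a ^ (-(N : ℤ)) = 1 := by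
        rw [← zpow_add]
        simp
      rw [e₁] at h₁
      rw [e₂] at h₂
      exact Set.disjoint_left.mp hdisj h₁ h₂
end

section
/- Let G = GL(n, ℂ) be the general linear group with its standard topology, and let a ∈ G be a matrix having an eigenvalue λ with |λ| ≠ 1. Then G admits a terminal pair with respect to a. -/
/-- Auxiliary version: the case `1 < |λ|`. -/
lemma GL_terminalPair_aux
    {n : ℕ} (a : GL (Fin n) ℂ) (v : Fin n → ℂ) (hv : v ≠ 0) (lam : ℂ)
    (hav : (a : Matrix (Fin n) (Fin n) ℂ).mulVec v = lam • v)
    (hr : 1 < ‖lam‖) :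
    ∃ A B : Set (GL (Fin n) ℂ), IsTerminalPair a A B := by
  have hlam0 : lam ≠ 0 := by
    intro h
    rw [h] at hr
    simp at hr
    linarith
  set r : ℝ := ‖lam‖ with hrdef
  have hr0 : (0:ℝ) < r := lt_trans one_pos hr
  set f : GL (Fin n) ℂ → ℝ := fun g => ‖(g : Matrix (Fin n) (Fin n) ℂ).mulVec v‖ with hf
  -- continuity of f
  have hcont : Continuous f := by
    apply Continuous.norm
    have h1 : Continuous fun m : Matrix (Fin n) (Fin n) ℂ => m.mulVec v := by
      apply continuous_pi
      intro i
      simp only [Matrix.mulVec, dotProduct]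
      exact continuous_finset_sum _ fun j _ =>
        (((continuous_apply j).comp (continuous_apply i) :
          Continuous fun m : Matrix (Fin n) (Fin n) ℂ => m i j)).mul continuous_const
    exact h1.comp Units.continuous_val
  -- positivity of f
  have hfpos : ∀ x : GL (Fin n) ℂ, 0 < f x := by
    intro x
    have hne : (x : Matrix (Fin n) (Fin n) ℂ).mulVec v ≠ 0 := by
      intro h0
      apply hv
      have h1 : ((x⁻¹ : GL (Fin n) ℂ) : Matrix (Fin n) (Fin n) ℂ).mulVec
          ((x : Matrix (Fin n) (Fin n) ℂ).mulVec v) = v := by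
        rw [Matrix.mulVec_mulVec, Units.inv_mul, Matrix.one_mulVec]
      rw [h0, Matrix.mulVec_zero] at h1
      exact h1.symm
    exact norm_pos_iff.mpr hne
  -- eigenvalue equation for powers
  have hpow : ∀ k : ℕ, ((a ^ k : GL (Fin n) ℂ) : Matrix (Fin n) (Fin n) ℂ).mulVec v
      = lam ^ k • v := by
    intro k
    induction k with
    | zero => simp [Matrix.one_mulVec]
    | succ k ih =>
      have e : ((a ^ (k+1) : GL (Fin n) ℂ) : Matrix (Fin n) (Fin n) ℂ)
          = ((a ^ k : GL (Fin n) ℂ) : Matrix (Fin n) (Fin n) ℂ)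
            * (a : Matrix (Fin n) (Fin n) ℂ) := by
        rw [pow_succ, Units.val_mul]
      rw [e, ← Matrix.mulVec_mulVec, hav, Matrix.mulVec_smul, ih, smul_smul,
        pow_succ, mul_comm]
  have hpowinv : ∀ k : ℕ,
      ((a ^ (-(k:ℤ)) : GL (Fin n) ℂ) : Matrix (Fin n) (Fin n) ℂ).mulVec v
      = (lam ^ k)⁻¹ • v := by
    intro k
    have e : (a ^ (-(k:ℤ)) : GL (Fin n) ℂ) = (a ^ k)⁻¹ := by
      rw [zpow_neg, zpow_natCast]
    rw [e]
    have hl : lam ^ k ≠ 0 := pow_ne_zero _ hlam0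
    have h2 : (((a ^ k)⁻¹ : GL (Fin n) ℂ) : Matrix (Fin n) (Fin n) ℂ).mulVec
        (((a ^ k : GL (Fin n) ℂ) : Matrix (Fin n) (Fin n) ℂ).mulVec v) = v := by
      rw [Matrix.mulVec_mulVec, Units.inv_mul, Matrix.one_mulVec]
    rw [hpow k, Matrix.mulVec_smul] at h2
    exact ((inv_smul_eq_iff₀ hl).2 h2.symm).symm
  -- scaling of f
  have hscale : ∀ (x : GL (Fin n) ℂ) (k : ℕ),
      f (x * a ^ k) = r ^ k * f x ∧ f (x * a ^ (-(k:ℤ))) = (r ^ k)⁻¹ * f x := by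
    intro x k
    constructor
    · show ‖((x * a ^ k : GL (Fin n) ℂ) : Matrix (Fin n) (Fin n) ℂ).mulVec v‖ = _
      rw [Units.val_mul, ← Matrix.mulVec_mulVec, hpow k, Matrix.mulVec_smul, norm_smul]
      simp [hrdef, hf, map_pow]
    · show ‖((x * a ^ (-(k:ℤ)) : GL (Fin n) ℂ) : Matrix (Fin n) (Fin n) ℂ).mulVec v‖ = _
      rw [Units.val_mul, ← Matrix.mulVec_mulVec, hpowinv k, Matrix.mulVec_smul, norm_smul]
      simp [hrdef, hf, map_pow]
  refine ⟨{g | 2 ≤ f g}, {g | f g ≤ 1}, isClosed_le continuous_const hcont,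
    isClosed_le hcont continuous_const, ?_, ?_⟩
  · rw [Set.disjoint_left]
    intro g hgA hgB
    have h1 : (2:ℝ) ≤ f g := hgA
    have h2 : f g ≤ 1 := hgB
    linarith
  · intro K hK
    rcases K.eq_empty_or_nonempty with h | h
    · exact ⟨0, fun k _ x hx => absurd hx (by simp [h])⟩
    obtain ⟨x₀, hx₀K, hx₀⟩ := hK.exists_isMinOn h hcont.continuousOn
    obtain ⟨x₁, hx₁K, hx₁⟩ := hK.exists_isMaxOn h hcont.continuousOn
    have hm : 0 < f x₀ := hfpos x₀
    have ht := tendsto_pow_atTop_atTop_of_one_lt hr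
    obtain ⟨N, hN⟩ := Filter.eventually_atTop.1 (ht.eventually_ge_atTop (max (2 / f x₀) (f x₁)))
    refine ⟨N, fun k hk x hx => ?_⟩
    have hrk : max (2 / f x₀) (f x₁) ≤ r ^ k := hN k hk
    have hrk0 : (0:ℝ) < r ^ k := pow_pos hr0 k
    constructor
    · show 2 ≤ f (x * a ^ k)
      rw [(hscale x k).1]
      have h2m : 2 / f x₀ ≤ r ^ k := le_trans (le_max_left _ _) hrk
      have hfx : f x₀ ≤ f x := hx₀ hx
      calc (2:ℝ) = (2 / f x₀) * f x₀ := (div_mul_cancel₀ 2 hm.ne').symm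
        _ ≤ r ^ k * f x := by
            apply mul_le_mul h2m hfx hm.le hrk0.le
    · show f (x * a ^ (-(k:ℤ))) ≤ 1
      rw [(hscale x k).2]
      have hMk : f x₁ ≤ r ^ k := le_trans (le_max_right _ _) hrk
      have hfx : f x ≤ f x₁ := hx₁ hx
      calc (r ^ k)⁻¹ * f x ≤ (r ^ k)⁻¹ * r ^ k :=
            mul_le_mul_of_nonneg_left (hfx.trans hMk) (inv_nonneg.2 hrk0.le)
        _ = 1 := inv_mul_cancel₀ hrk0.ne'

/-- If `a ∈ GL(n, ℂ)` has an eigenvalue `λ` with `|λ| ≠ 1`, then `GL(n, ℂ)` admits a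
terminal pair with respect to `a`. -/
theorem GL_terminalPair_of_eigenvalue_abs_ne_one
    {n : ℕ} (a : GL (Fin n) ℂ) (lam : ℂ)
    (hlam : ∃ v : Fin n → ℂ, v ≠ 0 ∧ (a : Matrix (Fin n) (Fin n) ℂ).mulVec v = lam • v)
    (habs : ‖lam‖ ≠ 1) :
    ∃ A B : Set (GL (Fin n) ℂ), IsTerminalPair a A B := by
  obtain ⟨v, hv, hav⟩ := hlam
  have hlam0 : lam ≠ 0 := by
    intro h
    apply hv
    rw [h, zero_smul] at hav
    have h1 : ((a⁻¹ : GL (Fin n) ℂ) : Matrix (Fin n) (Fin n) ℂ).mulVec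
        ((a : Matrix (Fin n) (Fin n) ℂ).mulVec v) = v := by
      rw [Matrix.mulVec_mulVec, Units.inv_mul, Matrix.one_mulVec]
    rw [hav, Matrix.mulVec_zero] at h1
    exact h1.symm
  rcases habs.lt_or_gt with hlt | hgt
  · -- |λ| < 1 : use a⁻¹, which has eigenvalue λ⁻¹ with |λ⁻¹| > 1
    have hinv : ((a⁻¹ : GL (Fin n) ℂ) : Matrix (Fin n) (Fin n) ℂ).mulVec v = lam⁻¹ • v := by
      have h1 : ((a⁻¹ : GL (Fin n) ℂ) : Matrix (Fin n) (Fin n) ℂ).mulVec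
          ((a : Matrix (Fin n) (Fin n) ℂ).mulVec v) = v := by
        rw [Matrix.mulVec_mulVec, Units.inv_mul, Matrix.one_mulVec]
      rw [hav, Matrix.mulVec_smul] at h1
      exact ((inv_smul_eq_iff₀ hlam0).2 h1.symm).symm
    have habs0 : 0 < ‖lam‖ := by
      simpa [AbsoluteValue.pos_iff] using hlam0
    have hr : 1 < ‖lam⁻¹‖ := by
      rw [norm_inv]
      exact (one_lt_inv₀ habs0).2 hlt
    obtain ⟨A, B, hA, hB, hd, hKP⟩ := GL_terminalPair_aux a⁻¹ v hv lam⁻¹ hinv hr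
    refine ⟨B, A, hB, hA, hd.symm, ?_⟩
    intro K hK
    obtain ⟨N, hN⟩ := hKP K hK
    refine ⟨N, fun k hk x hx => ?_⟩
    obtain ⟨h1, h2⟩ := hN k hk x hx
    have e1 : (a⁻¹ : GL (Fin n) ℂ) ^ k = a ^ (-(k:ℤ)) := by
      rw [zpow_neg, zpow_natCast, inv_pow]
    have e2 : (a⁻¹ : GL (Fin n) ℂ) ^ (-(k:ℤ)) = a ^ k := by
      rw [zpow_neg, inv_zpow, inv_inv, zpow_natCast]
    rw [e1] at h1
    rw [e2] at h2
    exact ⟨h2, h1⟩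
  · exact GL_terminalPair_aux a v hv lam hav hgt
end

section
/- Let a ∈ GL(n, ℂ). Then a is a periodic element of the topological group GL(n, ℂ) if and only if a is diagonalizable with every eigenvalue of absolute value 1; that is, if and only if there exist P ∈ GL(n, ℂ) and a diagonal matrix D with |D_{ii}| = 1 for all i such that a = P D P^{-1}. -/
open Matrix Module

/-- An element `a` of a topological group is *periodic* if the closed subgroup it
generates (the closure of the cyclic subgroup `⟨a⟩`) is compact. -/
def IsPeriodic {G : Type*} [Group G] [TopologicalSpace G] (a : G) : Prop :=
  IsCompact (closure (Subgroup.zpowers a : Set G))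

namespace GLPeriodicAux

variable {n : ℕ}

/-- If `a` is periodic, the orbit of any vector under the powers of `a` is bounded. -/
lemma exists_bound (a : GL (Fin n) ℂ) (h : IsPeriodic a) (v : Fin n → ℂ) :
    ∃ C : ℝ, ∀ g ∈ Subgroup.zpowers a,
      ‖((g : GL (Fin n) ℂ) : Matrix (Fin n) (Fin n) ℂ) *ᵥ v‖ ≤ C := by
  have hc : Continuous fun g : GL (Fin n) ℂ => ((g : Matrix (Fin n) (Fin n) ℂ)) *ᵥ v :=
    Units.continuous_val.matrix_mulVec continuous_const
  have hK : IsCompact ((fun g : GL (Fin n) ℂ => ((g : Matrix (Fin n) (Fin n) ℂ)) *ᵥ v) ''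
      closure (Subgroup.zpowers a : Set (GL (Fin n) ℂ))) := h.image hc
  obtain ⟨C, hC⟩ := hK.isBounded.subset_closedBall 0
  refine ⟨C, fun g hg => ?_⟩
  have := hC (Set.mem_image_of_mem _ (subset_closure hg))
  simpa [Metric.mem_closedBall, dist_zero_right] using this

/-- If the powers of `b` applied to an eigenvector of `b` are bounded,
the eigenvalue has absolute value at most 1. -/
lemma abs_le_one_of_bound {b : GL (Fin n) ℂ} {μ : ℂ} {v : Fin n → ℂ} (hv : v ≠ 0) {C : ℝ}
    (hC : ∀ k : ℕ, ‖((b ^ k : GL (Fin n) ℂ) : Matrix (Fin n) (Fin n) ℂ) *ᵥ v‖ ≤ C)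
    (heig : (b : Matrix (Fin n) (Fin n) ℂ) *ᵥ v = μ • v) : ‖μ‖ ≤ 1 := by
  have hpow : ∀ k : ℕ, ((b ^ k : GL (Fin n) ℂ) : Matrix (Fin n) (Fin n) ℂ) *ᵥ v = μ ^ k • v := by
    intro k
    induction k with
    | zero => simp
    | succ k ih =>
      rw [pow_succ', Units.val_mul, ← mulVec_mulVec, ih, mulVec_smul, heig, smul_smul, ← pow_succ]
  by_contra hμ
  push_neg at hμ
  have hvpos : (0:ℝ) < ‖v‖ := norm_pos_iff.mpr hv
  obtain ⟨k, hk⟩ := pow_unbounded_of_one_lt (C / ‖v‖) hμ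
  have hCk := hC k
  rw [hpow k, norm_smul] at hCk
  have hnorm : ‖μ ^ k‖ = ‖μ‖ ^ k := by
    rw [norm_pow]
  rw [hnorm] at hCk
  rw [div_lt_iff₀ hvpos] at hk
  nlinarith

/-- Every eigenvalue of a periodic element of `GL(n, ℂ)` has absolute value 1. -/
lemma abs_eq_one (a : GL (Fin n) ℂ) (h : IsPeriodic a) {μ : ℂ} {v : Fin n → ℂ}
    (hv : v ≠ 0) (heig : (a : Matrix (Fin n) (Fin n) ℂ) *ᵥ v = μ • v) : ‖μ‖ = 1 := by
  obtain ⟨C, hC⟩ := exists_bound a h v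
  have h1 : ‖μ‖ ≤ 1 :=
    abs_le_one_of_bound hv (fun k => hC _ (pow_mem (Subgroup.mem_zpowers a) k)) heig
  have hone : ((a⁻¹ : GL (Fin n) ℂ) : Matrix (Fin n) (Fin n) ℂ) *ᵥ
      ((a : Matrix (Fin n) (Fin n) ℂ) *ᵥ v) = v := by
    rw [mulVec_mulVec, ← Units.val_mul, inv_mul_cancel, Units.val_one, one_mulVec]
  rw [heig, mulVec_smul] at hone
  have hμ0 : μ ≠ 0 := by
    rintro rfl
    rw [zero_smul] at hone
    exact hv hone.symm
  have hinv : ((a⁻¹ : GL (Fin n) ℂ) : Matrix (Fin n) (Fin n) ℂ) *ᵥ v = μ⁻¹ • v := by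
    have := congrArg (fun w => μ⁻¹ • w) hone
    simpa [smul_smul, inv_mul_cancel₀ hμ0] using this
  have h2 : ‖μ⁻¹‖ ≤ 1 :=
    abs_le_one_of_bound hv
      (fun k => hC _ (pow_mem (Subgroup.inv_mem _ (Subgroup.mem_zpowers a)) k)) hinv
  rw [norm_inv] at h2
  have hpos : 0 < ‖μ‖ := norm_pos_iff.mpr hμ0
  have hid : (‖μ‖)⁻¹ * ‖μ‖ = 1 := inv_mul_cancel₀ (ne_of_gt hpos)
  nlinarith

/-- The monoid hom sending a tuple on the circle to the corresponding diagonal matrix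
in `GL(n, ℂ)`. -/
noncomputable def circleDiag : (Fin n → Circle) →* GL (Fin n) ℂ where
  toFun z :=
    ⟨diagonal fun i => (z i : ℂ), diagonal fun i => ((z i)⁻¹ : Circle),
      by simp [diagonal_mul_diagonal, ← Circle.coe_mul],
      by simp [diagonal_mul_diagonal, ← Circle.coe_mul]⟩
  map_one' := Units.ext <| by simp
  map_mul' z w := Units.ext <| by simp [diagonal_mul_diagonal]

lemma circleDiag_val (z : Fin n → Circle) :
    (circleDiag z : Matrix (Fin n) (Fin n) ℂ) = diagonal fun i => (z i : ℂ) := rfl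

/-- Conjugated circle-diagonal monoid hom. -/
noncomputable def conjDiag (P : GL (Fin n) ℂ) : (Fin n → Circle) →* GL (Fin n) ℂ :=
  (MulAut.conj P).toMonoidHom.comp circleDiag

lemma conjDiag_apply (P : GL (Fin n) ℂ) (z : Fin n → Circle) :
    conjDiag P z = P * circleDiag z * P⁻¹ := rfl

lemma conjDiag_val (P : GL (Fin n) ℂ) (z : Fin n → Circle) :
    (conjDiag P z : Matrix (Fin n) (Fin n) ℂ) =
      (P : Matrix (Fin n) (Fin n) ℂ) * Matrix.diagonal (fun i => (z i : ℂ)) *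
        ((P⁻¹ : GL (Fin n) ℂ) : Matrix (Fin n) (Fin n) ℂ) := by
  rw [conjDiag_apply, Units.val_mul, Units.val_mul, circleDiag_val]

end GLPeriodicAux

open GLPeriodicAux in
/-- `a ∈ GL(n, ℂ)` is periodic if and only if `a` is diagonalizable with every eigenvalue
of absolute value `1`, i.e. `a = P D P⁻¹` for some `P ∈ GL(n, ℂ)` and diagonal `D` with
`|D i i| = 1` for all `i`. -/
theorem GL_isPeriodic_iff_diagonalizable_unimodular
    {n : ℕ} (a : GL (Fin n) ℂ) :
    IsPeriodic a ↔
      ∃ (P : GL (Fin n) ℂ) (d : Fin n → ℂ), (∀ i, ‖d i‖ = 1) ∧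
        (a : Matrix (Fin n) (Fin n) ℂ) = P * Matrix.diagonal d * (↑(P⁻¹) : Matrix (Fin n) (Fin n) ℂ) := by
  constructor
  · intro h
    classical
    set A : Matrix (Fin n) (Fin n) ℂ := (a : Matrix (Fin n) (Fin n) ℂ) with hA
    set f : Module.End ℂ (Fin n → ℂ) := Matrix.toLin' A with hf
    have hpowf : ∀ k : ℕ, (f ^ k : Module.End ℂ (Fin n → ℂ)) = Matrix.toLin' (A ^ k) := by
      intro k
      induction k with
      | zero => rw [pow_zero, pow_zero, Matrix.toLin'_one]; rfl
      | succ k ih => rw [pow_succ, pow_succ, Matrix.toLin'_mul, ih, hf]; rfl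
    have hfpow : ∀ (k : ℕ) (x : Fin n → ℂ),
        (f ^ k) x = ((a ^ k : GL (Fin n) ℂ) : Matrix (Fin n) (Fin n) ℂ) *ᵥ x := by
      intro k x
      rw [hpowf k, Matrix.toLin'_apply, Units.val_pow_eq_pow_val, ← hA]
    have h2 : ∀ (μ : ℂ) (x : Fin n → ℂ), (f - μ • 1) ((f - μ • 1) x) = 0 →
        (f - μ • 1) x = 0 := by
      intro μ x hx
      by_contra hw
      set w : Fin n → ℂ := (f - μ • 1) x with hwdef
      have hweig : f w = μ • w := by
        rw [LinearMap.sub_apply, LinearMap.smul_apply, Module.End.one_apply, sub_eq_zero] at hx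
        exact hx
      have hweig' : A *ᵥ w = μ • w := by
        rw [← Matrix.toLin'_apply, ← hf]; exact hweig
      have habs1 : ‖μ‖ = 1 := abs_eq_one a h hw hweig'
      have hwx : w = f x - μ • x := by
        rw [hwdef, LinearMap.sub_apply, LinearMap.smul_apply, Module.End.one_apply]
      have hfx : f x = μ • x + w := by rw [hwx]; abel
      have hgrow : ∀ k : ℕ,
          (f ^ (k+1)) x = μ ^ (k+1) • x + (((k+1 : ℕ) : ℂ) * μ ^ k) • w := by
        intro k
        induction k with
        | zero => simpa using hfx
        | succ k ih =>
          have hstep : (f ^ (k+1+1)) x = f ((f ^ (k+1)) x) := by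
            rw [pow_succ', Module.End.mul_apply]
          rw [hstep, ih, map_add, _root_.map_smul, _root_.map_smul, hfx, hweig]
          push_cast
          module
      obtain ⟨C, hC⟩ := exists_bound a h x
      have hbound : ∀ k : ℕ, ((k+1 : ℕ) : ℝ) * ‖w‖ ≤ C + ‖x‖ := by
        intro k
        have h1 := hC _ (pow_mem (Subgroup.mem_zpowers a) (k+1))
        rw [← hfpow] at h1
        rw [hgrow k] at h1
        have hnw : ‖(((k+1:ℕ):ℂ) * μ ^ k) • w‖ = ((k+1:ℕ):ℝ) * ‖w‖ := by
          rw [norm_smul, norm_mul, norm_pow, habs1, one_pow, mul_one,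
            Complex.norm_natCast]
        have hnx : ‖μ ^ (k+1) • x‖ = ‖x‖ := by
          rw [norm_smul, norm_pow, habs1, one_pow, one_mul]
        calc ((k+1:ℕ):ℝ) * ‖w‖ = ‖(((k+1:ℕ):ℂ) * μ ^ k) • w‖ := hnw.symm
          _ = ‖(μ ^ (k+1) • x + (((k+1:ℕ):ℂ) * μ ^ k) • w) - μ ^ (k+1) • x‖ := by
              rw [add_sub_cancel_left]
          _ ≤ ‖μ ^ (k+1) • x + (((k+1:ℕ):ℂ) * μ ^ k) • w‖ + ‖μ ^ (k+1) • x‖ := norm_sub_le _ _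
          _ ≤ C + ‖x‖ := add_le_add h1 (le_of_eq hnx)
      obtain ⟨k, hk⟩ := exists_nat_gt ((C + ‖x‖) / ‖w‖)
      have hwpos : (0:ℝ) < ‖w‖ := norm_pos_iff.mpr hw
      rw [div_lt_iff₀ hwpos] at hk
      have hbk := hbound k
      have hkk : (k:ℝ) ≤ ((k+1:ℕ):ℝ) := by push_cast; linarith
      nlinarith
    have hmax : ∀ μ : ℂ, f.maxGenEigenspace μ ≤ f.eigenspace μ := by
      intro μ x hx
      obtain ⟨k, hk⟩ := (Module.End.mem_maxGenEigenspace f μ x).mp hx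
      rw [Module.End.mem_eigenspace_iff]
      have key : ∀ (m : ℕ) (y : Fin n → ℂ), ((f - μ • 1) ^ (m+1)) y = 0 →
          (f - μ • 1) y = 0 := by
        intro m
        induction m with
        | zero => intro y hy; simpa using hy
        | succ m ih =>
          intro y hy
          have hy' : ((f - μ • 1) ^ (m+1)) ((f - μ • 1) y) = 0 := by
            rw [← Module.End.mul_apply, ← pow_succ]
            exact hy
          exact h2 μ y (ih _ hy')
      cases k with
      | zero =>
        rw [pow_zero, Module.End.one_apply] at hk
        simp [hk]
      | succ k =>
        have hkey := key k x hk
        rwa [LinearMap.sub_apply, LinearMap.smul_apply, Module.End.one_apply, sub_eq_zero] at hkey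
    have hsup : ⨆ μ : ℂ, f.eigenspace μ = ⊤ := by
      rw [eq_top_iff, ← Module.End.iSup_maxGenEigenspace_eq_top f]
      exact iSup_mono hmax
    have hInt : DirectSum.IsInternal f.eigenspace :=
      (DirectSum.isInternal_submodule_iff_iSupIndep_and_iSup_eq_top _).mpr
        ⟨f.eigenspaces_iSupIndep, hsup⟩
    let bμ : (μ : ℂ) → Basis (Fin (finrank ℂ (f.eigenspace μ))) ℂ (f.eigenspace μ) :=
      fun μ => Module.finBasis ℂ _
    let b0 := hInt.collectedBasis bμ
    haveI : Fintype ((μ : ℂ) × Fin (finrank ℂ (f.eigenspace μ))) :=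
      FiniteDimensional.fintypeBasisIndex b0
    have hcard : Fintype.card ((μ : ℂ) × Fin (finrank ℂ (f.eigenspace μ))) = n := by
      rw [← Module.finrank_eq_card_basis b0, Module.finrank_pi, Fintype.card_fin]
    let e := Fintype.equivFinOfCardEq hcard
    let b := b0.reindex e
    let d : Fin n → ℂ := fun j => (e.symm j).1
    have hmemb : ∀ j, b j ∈ f.eigenspace (d j) := by
      intro j
      rw [Module.Basis.reindex_apply]
      exact hInt.collectedBasis_mem bμ (e.symm j)
    have hfb : ∀ j, f (b j) = d j • b j := fun j => Module.End.mem_eigenspace_iff.mp (hmemb j)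
    have hme : ∀ j, A *ᵥ b j = d j • b j := by
      intro j
      rw [← Matrix.toLin'_apply, ← hf]
      exact hfb j
    have habsd : ∀ j, ‖d j‖ = 1 := fun j => abs_eq_one a h (b.ne_zero j) (hme j)
    let e' := Pi.basisFun ℂ (Fin n)
    have hdiag : LinearMap.toMatrix b b f = Matrix.diagonal d := by
      ext i j
      rw [LinearMap.toMatrix_apply, hfb j, _root_.map_smul, Basis.repr_self]
      rcases eq_or_ne i j with rfl | hij
      · simp
      · simp [Matrix.diagonal_apply_ne _ hij, Finsupp.single_eq_of_ne' (Ne.symm hij)]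
    have hA' : LinearMap.toMatrix e' e' f = A := by
      show LinearMap.toMatrix (Pi.basisFun ℂ (Fin n)) (Pi.basisFun ℂ (Fin n)) f = A
      rw [LinearMap.toMatrix_eq_toMatrix', hf]
      exact LinearMap.toMatrix'_toLin' A
    have hchg : e'.toMatrix ⇑b * LinearMap.toMatrix b b f * b.toMatrix ⇑e' =
        LinearMap.toMatrix e' e' f := by
      rw [basis_toMatrix_mul_linearMap_toMatrix, linearMap_toMatrix_mul_basis_toMatrix]
    refine ⟨⟨e'.toMatrix ⇑b, b.toMatrix ⇑e',
      Basis.toMatrix_mul_toMatrix_flip e' b, Basis.toMatrix_mul_toMatrix_flip b e'⟩, d, habsd, ?_⟩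
    show A = e'.toMatrix ⇑b * Matrix.diagonal d * b.toMatrix ⇑e'
    rw [← hdiag, hchg, hA']
  · rintro ⟨P, d, habs, hPDP⟩
    have hmem : ∀ i, (d i) ∈ Submonoid.unitSphere ℂ := fun i =>
      mem_sphere_zero_iff_norm.mpr (by rw [habs i])
    set z₀ : Fin n → Circle := fun i => ⟨d i, hmem i⟩ with hz₀
    let φ : (Fin n → Circle) →* GL (Fin n) ℂ := conjDiag P
    have hφval : ∀ z : Fin n → Circle, (φ z : Matrix (Fin n) (Fin n) ℂ) =
        (P : Matrix (Fin n) (Fin n) ℂ) * Matrix.diagonal (fun i => (z i : ℂ)) *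
          ((P⁻¹ : GL (Fin n) ℂ) : Matrix (Fin n) (Fin n) ℂ) := fun z => conjDiag_val P z
    have ha : a = φ z₀ := Units.ext <| by rw [hφval]; exact hPDP
    have hval : Continuous fun z : Fin n → Circle => (φ z : Matrix (Fin n) (Fin n) ℂ) := by
      simp only [hφval]
      exact (continuous_const.matrix_mul ((continuous_pi fun i =>
        continuous_subtype_val.comp (continuous_apply i)).matrix_diagonal)).matrix_mul
        continuous_const
    have hcont : Continuous φ := by
      refine Units.continuous_iff.mpr ⟨hval, ?_⟩
      have heq : (fun z : Fin n → Circle => (↑(φ z)⁻¹ : Matrix (Fin n) (Fin n) ℂ)) =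
          (fun z : Fin n → Circle => (φ z : Matrix (Fin n) (Fin n) ℂ)) ∘ fun z => z⁻¹ := by
        funext z
        rw [Function.comp_apply, ← map_inv φ z]
      rw [heq]
      exact hval.comp continuous_inv
    have hrange : IsCompact (Set.range φ) := isCompact_range hcont
    refine IsCompact.of_isClosed_subset hrange isClosed_closure
      (closure_minimal ?_ hrange.isClosed)
    intro g hg
    rw [SetLike.mem_coe, Subgroup.mem_zpowers_iff] at hg
    obtain ⟨k, rfl⟩ := hg
    exact ⟨z₀ ^ k, by rw [map_zpow, ← ha]⟩
end

section
/- Let G be a second countable locally compact Hausdorff group equipped with a right Haar measure, and suppose G admits a terminal pair (A, B) with respect to a ∈ G. Then there exists a bounded continuous function w : G → ℝ with values in [1/2, 2], with w ≡ 1/2 on A and w ≡ 2 on B, such that for every p ∈ [1, ∞) the weighted translation T = T_{a,w} on L^p(G) is invertible with inverse S = T_{a^{-1}, w'}, where w'(x) = 1/w(xa), and for every bounded compactly supported measurable function φ on G both series Σ_{n≥0} ‖T^n φ‖_p and Σ_{n≥0} ‖S^n φ‖_p converge (so Σ T^n φ and Σ S^n φ converge unconditionally in L^p(G)), and T S φ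 = φ. -/
open MeasureTheory
open scoped ENNReal NNReal
open Filter

section Aux
variable {G : Type*} [Group G] [TopologicalSpace G] [IsTopologicalGroup G]
  [MeasurableSpace G] [BorelSpace G]
  (μ : Measure G) [μ.IsMulRightInvariant]
  {p : ℝ≥0∞} [Fact (1 ≤ p)]

theorem wt_memLp (v : G → ℝ) (b : G) (hv : Continuous v) (C : ℝ) (hC : ∀ x, ‖v x‖ ≤ C)
    (f : Lp ℂ p μ) : MemLp (fun x => (v x : ℂ) * f (x * b)) p μ := by
  have h1 : MemLp (fun x => f (x * b)) p μ :=
    (Lp.memLp f).comp_measurePreserving (measurePreserving_mul_right μ b)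
  have h2 : MemLp (fun x => (v x : ℂ)) ∞ μ :=
    memLp_top_of_bound (Complex.continuous_ofReal.comp hv).aestronglyMeasurable C
      (Filter.Eventually.of_forall fun x => by simpa using hC x)
  exact MemLp.mul' (r := p) h1 h2

/-- pull back an a.e. property along right translation -/
theorem wt_ae (b : G) {q : G → Prop} (h : ∀ᵐ x ∂μ, q x) : ∀ᵐ x ∂μ, q (x * b) :=
  (measurePreserving_mul_right μ b).quasiMeasurePreserving.ae h

noncomputable def wtOp (v : G → ℝ) (b : G) (hv : Continuous v) (C : ℝ) (hC : ∀ x, ‖v x‖ ≤ C) :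
    Lp ℂ p μ →L[ℂ] Lp ℂ p μ := by
  refine LinearMap.mkContinuous
    { toFun := fun f => (wt_memLp μ v b hv C hC f).toLp _
      map_add' := ?_, map_smul' := ?_ } (max C 0) ?_
  · intro f g
    apply Lp.ext
    filter_upwards [(wt_memLp μ v b hv C hC (f + g)).coeFn_toLp,
      (wt_memLp μ v b hv C hC f).coeFn_toLp, (wt_memLp μ v b hv C hC g).coeFn_toLp,
      Lp.coeFn_add ((wt_memLp μ v b hv C hC f).toLp _) ((wt_memLp μ v b hv C hC g).toLp _),
      wt_ae μ b (Lp.coeFn_add f g)] with x h1 h2 h3 h4 h5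
    simp only [h1, h4, Pi.add_apply, h2, h3, h5]
    ring
  · intro c f
    apply Lp.ext
    filter_upwards [(wt_memLp μ v b hv C hC (c • f)).coeFn_toLp,
      (wt_memLp μ v b hv C hC f).coeFn_toLp,
      Lp.coeFn_smul c ((wt_memLp μ v b hv C hC f).toLp _),
      wt_ae μ b (Lp.coeFn_smul c f)] with x h1 h2 h3 h4
    simp only [h1, h3, Pi.smul_apply, h2, h4, smul_eq_mul, RingHom.id_apply]
    ring
  · intro f
    simp only [LinearMap.coe_mk, AddHom.coe_mk]
    rw [Lp.norm_toLp]
    have hcomp : eLpNorm (fun x => f (x * b)) p μ = eLpNorm f p μ :=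
      eLpNorm_comp_measurePreserving (Lp.aestronglyMeasurable f)
        (measurePreserving_mul_right μ b)
    have hb : ∀ᵐ x ∂μ, ‖(v x : ℂ) * f (x * b)‖ ≤ C.toNNReal * ‖f (x * b)‖ := by
      refine Filter.Eventually.of_forall fun x => ?_
      rw [norm_mul]
      refine mul_le_mul_of_nonneg_right ?_ (norm_nonneg _)
      rw [Complex.norm_real, Real.coe_toNNReal']
      exact (hC x).trans (le_max_left _ _)
    have := eLpNorm_le_nnreal_smul_eLpNorm_of_ae_le_mul hb p
    rw [hcomp] at this
    calc (eLpNorm (fun x => (v x : ℂ) * f (x * b)) p μ).toReal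
        ≤ ((C.toNNReal : ℝ≥0) • eLpNorm f p μ).toReal := by
          apply ENNReal.toReal_mono _ this
          exact ENNReal.mul_ne_top ENNReal.coe_ne_top (Lp.memLp f).eLpNorm_ne_top
      _ = max C 0 * ‖f‖ := by
          rw [ENNReal.smul_def, smul_eq_mul, ENNReal.toReal_mul, ENNReal.coe_toReal,
            Real.coe_toNNReal', Lp.norm_def]

theorem wtOp_coeFn (v : G → ℝ) (b : G) (hv : Continuous v) (C : ℝ) (hC : ∀ x, ‖v x‖ ≤ C)
    (f : Lp ℂ p μ) :
    wtOp μ v b hv C hC f =ᵐ[μ] fun x => (v x : ℂ) * f (x * b) :=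
  (wt_memLp μ v b hv C hC f).coeFn_toLp

theorem wtOp_support (v : G → ℝ) (b : G) (hv : Continuous v) (C : ℝ) (hC : ∀ x, ‖v x‖ ≤ C)
    (f : Lp ℂ p μ) {D : Set G} (hD : ∀ᵐ x ∂μ, x ∉ D → f x = 0) :
    ∀ᵐ x ∂μ, x * b ∉ D → wtOp μ v b hv C hC f x = 0 := by
  filter_upwards [wtOp_coeFn μ v b hv C hC f, wt_ae μ b hD] with x h1 h2 hx
  rw [h1, h2 hx, mul_zero]

theorem wtOp_norm_le (v : G → ℝ) (b : G) (hv : Continuous v) (C : ℝ) (hC : ∀ x, ‖v x‖ ≤ C)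
    (f : Lp ℂ p μ) {D : Set G} {c : ℝ} (hc : 0 ≤ c)
    (hD : ∀ᵐ x ∂μ, x ∉ D → f x = 0) (hvc : ∀ x, x * b ∈ D → ‖v x‖ ≤ c) :
    ‖wtOp μ v b hv C hC f‖ ≤ c * ‖f‖ := by
  have h1 : MemLp (fun x => f (x * b)) p μ :=
    (Lp.memLp f).comp_measurePreserving (measurePreserving_mul_right μ b)
  have hcomp : eLpNorm (fun x => f (x * b)) p μ = eLpNorm f p μ :=
    eLpNorm_comp_measurePreserving (Lp.aestronglyMeasurable f)
      (measurePreserving_mul_right μ b)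
  have hg : ‖h1.toLp _‖ = ‖f‖ := by
    rw [Lp.norm_toLp, hcomp, Lp.norm_def]
  rw [← hg]
  apply Lp.norm_le_mul_norm_of_ae_le_mul
  filter_upwards [wtOp_coeFn μ v b hv C hC f, h1.coeFn_toLp, wt_ae μ b hD] with x h2 h3 h4
  rw [h2, h3, norm_mul]
  by_cases hx : x * b ∈ D
  · refine mul_le_mul_of_nonneg_right ?_ (norm_nonneg _)
    rw [Complex.norm_real]
    exact hvc x hx
  · rw [h4 hx, norm_zero, mul_zero]
    positivity

end Aux

/-- If a second countable locally compact Hausdorff group `G` with right Haar measure `μ`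
admits a terminal pair `(A, B)` with respect to `a`, then there is a continuous weight
`w : G → [1/2, 2]` with `w ≡ 1/2` on `A` and `w ≡ 2` on `B`, such that for every
`p ∈ [1, ∞)` the weighted translation `T = T_{a,w}` on `L^p(G)` is invertible with
inverse `S = T_{a⁻¹, w'}` where `w'(x) = 1 / w(xa)`, and for every bounded compactly
supported `φ` the series `Σ ‖T^n φ‖` and `Σ ‖S^n φ‖` converge (so `Σ T^n φ` and
`Σ S^n φ` converge unconditionally) and `T (S φ) = φ`. -/
theorem terminalPair_exists_weight_satisfying_FHC
    {G : Type*} [Group G] [TopologicalSpace G] [IsTopologicalGroup G]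
    [LocallyCompactSpace G] [T2Space G] [SecondCountableTopology G]
    [MeasurableSpace G] [BorelSpace G]
    (μ : Measure G) [μ.Regular] [μ.IsMulRightInvariant] [μ.IsOpenPosMeasure]
    (a : G) (A B : Set G) (hAB : IsTerminalPair a A B) :
    ∃ w : G → ℝ, Continuous w ∧ (∀ x, w x ∈ Set.Icc (1/2 : ℝ) 2) ∧
      (∀ x ∈ A, w x = 1/2) ∧ (∀ x ∈ B, w x = 2) ∧
      ∀ (p : ℝ≥0∞) [Fact (1 ≤ p)], p ≠ ∞ →
        ∃ T S : Lp ℂ p μ →L[ℂ] Lp ℂ p μ,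
          (∀ f : Lp ℂ p μ, T f =ᵐ[μ] fun x => (w x : ℂ) * f (x * a⁻¹)) ∧
          (∀ f : Lp ℂ p μ, S f =ᵐ[μ] fun x => ((w (x * a) : ℂ))⁻¹ * f (x * a)) ∧
          (∀ f : Lp ℂ p μ, T (S f) = f) ∧ (∀ f : Lp ℂ p μ, S (T f) = f) ∧
          ∀ φ : Lp ℂ p μ,
            (∃ C : ℝ, ∀ᵐ x ∂μ, ‖φ x‖ ≤ C) →
            (∃ K : Set G, IsCompact K ∧ ∀ᵐ x ∂μ, x ∉ K → φ x = 0) →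
            Summable (fun n : ℕ => ‖(T ^ n) φ‖) ∧
            Summable (fun n : ℕ => ‖(S ^ n) φ‖) ∧
            T (S φ) = φ := by
  obtain ⟨hA, hB, hd, hterm⟩ := hAB
  obtain ⟨f0, hf0A, hf0B, hf01⟩ := exists_continuous_zero_one_of_isClosed hA hB hd
  set w : G → ℝ := fun x => 1/2 + (3/2) * f0 x with hwdef
  have hwc : Continuous w := by fun_prop
  have hwmem : ∀ x, w x ∈ Set.Icc (1/2:ℝ) 2 := fun x => by
    obtain ⟨h0, h1⟩ := hf01 x
    constructor
    · simp only [hwdef]; nlinarith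
    · simp only [hwdef]; nlinarith
  have hwA : ∀ x ∈ A, w x = 1/2 := fun x hx => by
    have := hf0A hx
    simp only [hwdef, Pi.zero_apply] at this ⊢
    rw [this]; ring
  have hwB : ∀ x ∈ B, w x = 2 := fun x hx => by
    have := hf0B hx
    simp only [hwdef, Pi.one_apply] at this ⊢
    rw [this]; ring
  refine ⟨w, hwc, hwmem, hwA, hwB, ?_⟩
  intro p hp hpne
  haveI := hp
  have hwpos : ∀ x, 0 < w x := fun x => lt_of_lt_of_le (by norm_num) (hwmem x).1
  have hwb : ∀ x, ‖w x‖ ≤ 2 := fun x => by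
    rw [Real.norm_eq_abs, abs_of_nonneg (hwpos x).le]
    exact (hwmem x).2
  set v' : G → ℝ := fun x => (w (x*a))⁻¹ with hv'def
  have hv'c : Continuous v' := Continuous.inv₀ (hwc.comp (continuous_mul_right a))
    (fun x => (hwpos _).ne')
  have hv'b : ∀ x, ‖v' x‖ ≤ 2 := fun x => by
    rw [Real.norm_eq_abs, abs_of_nonneg (inv_nonneg.2 (hwpos _).le)]
    have h1 : (2:ℝ)⁻¹ ≤ w (x*a) := by
      have := (hwmem (x*a)).1; linarith
    calc (w (x*a))⁻¹ ≤ ((2:ℝ)⁻¹)⁻¹ := inv_anti₀ (by norm_num) h1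
      _ = 2 := by norm_num
  set T := wtOp (p := p) μ w a⁻¹ hwc 2 hwb with hTdef
  set S := wtOp (p := p) μ v' a hv'c 2 hv'b with hSdef
  have hwne : ∀ x, (w x : ℂ) ≠ 0 := fun x => Complex.ofReal_ne_zero.2 (hwpos x).ne'
  have hTcoe : ∀ f : Lp ℂ p μ, T f =ᵐ[μ] fun x => (w x : ℂ) * f (x * a⁻¹) :=
    fun f => wtOp_coeFn μ w a⁻¹ hwc 2 hwb f
  have hScoe : ∀ f : Lp ℂ p μ, S f =ᵐ[μ] fun x => ((w (x * a) : ℂ))⁻¹ * f (x * a) := by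
    intro f
    refine (wtOp_coeFn μ v' a hv'c 2 hv'b f).trans ?_
    apply Filter.EventuallyEq.of_eq
    funext x
    simp only [hv'def, Complex.ofReal_inv]
  have hTS : ∀ f : Lp ℂ p μ, T (S f) = f := by
    intro f
    apply Lp.ext
    filter_upwards [hTcoe (S f), wt_ae μ a⁻¹ (hScoe f)] with x h1 h2
    rw [h1]
    rw [h2, inv_mul_cancel_right, ← mul_assoc, mul_inv_cancel₀ (hwne x), one_mul]
  have hST : ∀ f : Lp ℂ p μ, S (T f) = f := by
    intro f
    apply Lp.ext
    filter_upwards [hScoe (T f), wt_ae μ a (hTcoe f)] with x h1 h2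
    rw [h1]
    rw [h2, mul_inv_cancel_right, ← mul_assoc, inv_mul_cancel₀ (hwne (x*a)), one_mul]
  refine ⟨T, S, hTcoe, hScoe, hTS, hST, ?_⟩
  rintro φ - ⟨K, hK, hKs⟩
  obtain ⟨N, hN⟩ := hterm K hK
  -- support propagation for T
  have hTsupp : ∀ n : ℕ, ∀ᵐ x ∂μ, x ∉ (· * (a^n)⁻¹) ⁻¹' K → ((T^n) φ) x = 0 := by
    intro n
    induction n with
    | zero =>
      simp only [pow_zero, inv_one, mul_one]
      filter_upwards [hKs] with x hx h
      simpa using hx h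
    | succ n ih =>
      have key : ∀ x : G, x * a⁻¹ * (a^n)⁻¹ = x * (a^(n+1))⁻¹ := fun x => by
        rw [pow_succ, mul_inv_rev, mul_assoc]
      have h := wtOp_support μ w a⁻¹ hwc 2 hwb ((T^n) φ)
        (D := (· * (a^n)⁻¹) ⁻¹' K) ih
      filter_upwards [h] with x hx hmem
      rw [pow_succ', ContinuousLinearMap.mul_apply]
      refine hx fun hc => hmem ?_
      simp only [Set.mem_preimage] at hc ⊢
      rwa [key] at hc
  -- support propagation for S
  have hSsupp : ∀ n : ℕ, ∀ᵐ x ∂μ, x ∉ (· * a^n) ⁻¹' K → ((S^n) φ) x = 0 := by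
    intro n
    induction n with
    | zero =>
      simp only [pow_zero, mul_one]
      filter_upwards [hKs] with x hx h
      simpa using hx h
    | succ n ih =>
      have key : ∀ x : G, x * a * a^n = x * a^(n+1) := fun x => by
        rw [pow_succ', ← mul_assoc]
      have h := wtOp_support μ v' a hv'c 2 hv'b ((S^n) φ)
        (D := (· * a^n) ⁻¹' K) ih
      filter_upwards [h] with x hx hmem
      rw [pow_succ', ContinuousLinearMap.mul_apply]
      refine hx fun hc => hmem ?_
      simp only [Set.mem_preimage] at hc ⊢
      rwa [key] at hc
  -- norm decay
  have hTdec : ∀ n, N ≤ n → ‖(T^(n+1)) φ‖ ≤ (1/2) * ‖(T^n) φ‖ := by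
    intro n hn
    have he : (T^(n+1)) φ = T ((T^n) φ) := by rw [pow_succ']; rfl
    rw [he]
    refine wtOp_norm_le μ w a⁻¹ hwc 2 hwb ((T^n) φ) (by norm_num) (hTsupp n) ?_
    intro x hx
    simp only [Set.mem_preimage] at hx
    have hy := (hN (n+1) (by omega) _ hx).1
    have hxx : x * a⁻¹ * (a^n)⁻¹ * a^(n+1) = x := by
      group
    rw [hxx] at hy
    rw [hwA x hy, Real.norm_eq_abs, abs_of_nonneg (by norm_num : (0:ℝ) ≤ 1/2)]
  have hSdec : ∀ n, N ≤ n → ‖(S^(n+1)) φ‖ ≤ (1/2) * ‖(S^n) φ‖ := by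
    intro n hn
    have he : (S^(n+1)) φ = S ((S^n) φ) := by rw [pow_succ']; rfl
    rw [he]
    refine wtOp_norm_le μ v' a hv'c 2 hv'b ((S^n) φ) (by norm_num) (hSsupp n) ?_
    intro x hx
    simp only [Set.mem_preimage] at hx
    have hy := (hN n hn _ hx).2
    have hxx : x * a * a^n * a^(-(n:ℤ)) = x * a := by
      rw [zpow_neg, zpow_natCast, mul_inv_cancel_right]
    rw [hxx] at hy
    simp only [hv'def]
    rw [hwB _ hy, Real.norm_eq_abs, abs_of_nonneg (by norm_num : (0:ℝ) ≤ (2:ℝ)⁻¹)]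
    norm_num
  refine ⟨?_, ?_, hTS φ⟩
  · refine summable_of_ratio_norm_eventually_le (r := 1/2) (by norm_num) ?_
    rw [Filter.eventually_atTop]
    exact ⟨N, fun n hn => by simpa only [norm_norm] using hTdec n hn⟩
  · refine summable_of_ratio_norm_eventually_le (r := 1/2) (by norm_num) ?_
    rw [Filter.eventually_atTop]
    exact ⟨N, fun n hn => by simpa only [norm_norm] using hSdec n hn⟩
end

section
/- Let G be a second countable locally compact Hausdorff group equipped with a right Haar measure and let a ∈ G be an aperiodic element. Then for every p ∈ [1, ∞) there exists a bounded continuous function w : G → (0, ∞) such that the weighted translation T_{a,w} is hypercyclic on L^p(G): there exists f ∈ L^p(G) whose orbit {T_{a,w}^n f : n ∈ ℕ} is dense in L^p(G). -/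
set_option linter.unusedSectionVars false
set_option maxHeartbeats 1000000

open MeasureTheory Filter Topology Set
open scoped ENNReal Pointwise

section Aux

variable {G : Type*} [Group G] [TopologicalSpace G] [IsTopologicalGroup G]
  [LocallyCompactSpace G] [T2Space G] [SecondCountableTopology G]

/-- If all large powers of `a` lie in a compact set, the closed subgroup generated by `a`
is compact. -/
theorem aux_isCompact_closure_zpowers (a : G) {K : Set G} (hK : IsCompact K) (N : ℕ)
    (h : ∀ n, N ≤ n → a ^ n ∈ K) : IsCompact (closure (Subgroup.zpowers a : Set G)) := by
  -- the closure of the set of (nonnegative) powers is compact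
  have hsub : (Submonoid.powers a : Set G) ⊆ (fun n => a ^ n) '' (Set.Iio N) ∪ K := by
    rintro x ⟨n, rfl⟩
    rcases lt_or_ge n N with hn | hn
    · exact Set.mem_union_left _ ⟨n, hn, rfl⟩
    · exact Set.mem_union_right _ (h n hn)
  have hCc : IsCompact ((fun n => a ^ n) '' (Set.Iio N) ∪ K) :=
    (((Set.finite_Iio N).image _).isCompact).union hK
  have hPc : IsCompact (closure (Submonoid.powers a : Set G)) :=
    hCc.of_isClosed_subset isClosed_closure
      (closure_minimal hsub hCc.isClosed)
  -- the closure of the powers is a submonoid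
  set M : Submonoid G := (Submonoid.powers a).topologicalClosure with hM
  have hMc : (M : Set G) = closure (Submonoid.powers a : Set G) := rfl
  -- a⁻¹ belongs to M, via a convergent subsequence
  have hseq : ∀ n : ℕ, a ^ (n + N) ∈ K := fun n => h _ (Nat.le_add_left _ _)
  obtain ⟨x, -, φ, hφ, hlim⟩ := hK.isSeqCompact hseq
  have hgap : ∀ k : ℕ, φ (2 * k) + 2 ≤ φ (2 * (k + 1)) := by
    intro k
    have h1 : φ (2 * k) < φ (2 * k + 1) := hφ (by omega)
    have h2 : φ (2 * k + 1) < φ (2 * (k + 1)) := hφ (by omega)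
    omega
  have hainv : a⁻¹ ∈ M := by
    set e : ℕ → ℕ := fun k => φ (2 * (k + 1)) - φ (2 * k) - 1 with he
    have hbk : ∀ k, a ^ (φ (2 * (k + 1)) + N) * (a * a ^ (φ (2 * k) + N))⁻¹ = a ^ (e k) := by
      intro k
      rw [mul_inv_eq_iff_eq_mul]
      have : a ^ (e k) * (a * a ^ (φ (2 * k) + N)) = a ^ (e k) * a ^ (φ (2 * k) + N + 1) := by
        rw [pow_succ']
      rw [this, ← pow_add]
      congr 1
      have hg := hgap k
      simp only [he]
      omega
    have h2x : Tendsto (fun k => a ^ (φ (2 * (k + 1)) + N)) atTop (𝓝 x) := by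
      have hmono : StrictMono (fun k : ℕ => 2 * (k + 1)) := fun i j hij => by dsimp only; omega
      exact hlim.comp hmono.tendsto_atTop
    have h1x : Tendsto (fun k => a ^ (φ (2 * k) + N)) atTop (𝓝 x) := by
      have hmono : StrictMono (fun k : ℕ => 2 * k) := fun i j hij => by dsimp only; omega
      exact hlim.comp hmono.tendsto_atTop
    have hb : Tendsto (fun k => a ^ (φ (2 * (k + 1)) + N) * (a * a ^ (φ (2 * k) + N))⁻¹)
        atTop (𝓝 (x * (a * x)⁻¹)) :=
      h2x.mul ((tendsto_const_nhds.mul h1x).inv)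
    have hxx : x * (a * x)⁻¹ = a⁻¹ := by group
    rw [hxx] at hb
    have : ∀ k, a ^ (φ (2 * (k + 1)) + N) * (a * a ^ (φ (2 * k) + N))⁻¹
        ∈ (Submonoid.powers a : Set G) := by
      intro k
      rw [hbk k]
      exact ⟨e k, rfl⟩
    exact mem_closure_of_tendsto hb (Filter.Eventually.of_forall this)
  have hz : (Subgroup.zpowers a : Set G) ⊆ (M : Set G) := by
    rintro x ⟨n, rfl⟩
    cases n with
    | ofNat m =>
        have : a ^ m ∈ M := pow_mem ((Submonoid.powers a).le_topologicalClosure (Submonoid.mem_powers a)) m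
        simpa using this
    | negSucc m =>
        have h2 : (a⁻¹) ^ (m + 1) ∈ M := pow_mem hainv (m + 1)
        simpa [zpow_negSucc, inv_pow] using h2
  exact hPc.of_isClosed_subset isClosed_closure
    (closure_minimal (hz.trans (by rw [hMc])) hPc.isClosed)

theorem aux_escape (a : G) (ha : IsAperiodic a) :
    ∃ φ : ℕ → ℕ, StrictMono φ ∧ ∀ K : Set G, IsCompact K → ∀ᶠ k in atTop, a ^ φ k ∉ K := by
  let E := CompactExhaustion.choice G
  have H : ∀ m M : ℕ, ∃ n, M < n ∧ a ^ n ∉ E m := by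
    intro m M
    by_contra hc
    push_neg at hc
    exact ha (aux_isCompact_closure_zpowers a (E.isCompact m) (M + 1)
      (fun n hn => hc n (by omega)))
  choose g hg1 hg2 using H
  set φ : ℕ → ℕ := fun k => Nat.rec (g 0 0) (fun k ih => g (k + 1) ih) k with hφdef
  have hmono : StrictMono φ := strictMono_nat_of_lt_succ fun k => hg1 (k + 1) (φ k)
  have hout : ∀ k, a ^ φ k ∉ E k := by
    intro k
    cases k with
    | zero => exact hg2 0 0
    | succ k => exact hg2 (k + 1) (φ k)
  refine ⟨φ, hmono, fun K hK => ?_⟩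
  obtain ⟨m, hm⟩ := E.exists_superset_of_isCompact hK
  filter_upwards [eventually_ge_atTop m] with k hk hmem
  exact hout k (E.subset hk (hm hmem))

theorem aux_exists_proper :
    ∃ h : G → ℝ, Continuous h ∧ (∀ x, 0 ≤ h x) ∧
      ∀ M : ℝ, ∃ K : Set G, IsCompact K ∧ ∀ x ∉ K, M < h x := by
  let E := CompactExhaustion.choice G
  have hU : ∀ n : ℕ, ∃ f : C(G, ℝ), Set.EqOn f 0 (E n) ∧
      Set.EqOn f 1 (interior (E (n + 1)))ᶜ ∧ ∀ x, f x ∈ Set.Icc (0 : ℝ) 1 := by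
    intro n
    exact exists_continuous_zero_one_of_isCompact (E.isCompact n)
      isOpen_interior.isClosed_compl
      (Set.disjoint_compl_right_iff_subset.mpr (E.subset_interior_succ n))
  choose u hu0 hu1 hu2 using hU
  have hzero : ∀ (n : ℕ) (x : G), x ∈ E n → u n x = 0 := fun n x hx => hu0 n hx
  have usum : ∀ x : G, Summable (fun n => u n x) := by
    intro x
    apply summable_of_ne_finset_zero (s := Finset.range (E.find x))
    intro n hn
    simp only [Finset.mem_range, not_lt] at hn
    exact hzero n x (E.subset hn (E.mem_find x))
  refine ⟨fun x => ∑' n, u n x, ?_, ?_, ?_⟩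
  · rw [continuous_iff_continuousAt]
    intro x
    have hxm : x ∈ interior (E (E.find x + 1)) := E.subset_interior_succ _ (E.mem_find x)
    set m := E.find x + 1 with hm
    have heq : ∀ y ∈ interior (E m), ∑' n, u n y = ∑ n ∈ Finset.range m, u n y := by
      intro y hy
      apply tsum_eq_sum
      intro n hn
      simp only [Finset.mem_range, not_lt] at hn
      exact hzero n y (E.subset hn (interior_subset hy))
    have hcont : ContinuousAt (fun y => ∑ n ∈ Finset.range m, u n y) x :=
      (continuous_finset_sum _ fun n _ => (u n).continuous).continuousAt
    apply hcont.congr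
    filter_upwards [isOpen_interior.mem_nhds hxm] with y hy
    exact (heq y hy).symm
  · exact fun x => tsum_nonneg fun n => (hu2 n x).1
  · intro M
    set m := ⌈M⌉₊ with hm
    refine ⟨E (m + 1), E.isCompact _, fun x hx => ?_⟩
    have hone : ∀ n ∈ Finset.range (m + 1), u n x = 1 := by
      intro n hn
      simp only [Finset.mem_range, Nat.lt_succ_iff] at hn
      have : x ∈ (interior (E (n + 1)))ᶜ := by
        intro hmem
        exact hx (E.subset (by omega) (interior_subset hmem))
      simpa using hu1 n this
    have hsum : (m + 1 : ℝ) ≤ ∑' n, u n x := by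
      have h1 : ∑ n ∈ Finset.range (m + 1), u n x = (m + 1 : ℝ) := by
        rw [Finset.sum_congr rfl hone]
        simp
      calc (m + 1 : ℝ) = ∑ n ∈ Finset.range (m + 1), u n x := h1.symm
        _ ≤ ∑' n, u n x := Summable.sum_le_tsum _ (fun n _ => (hu2 n x).1) (usum x)
    have : M ≤ (m : ℝ) := Nat.le_ceil M
    linarith

/-- A continuous proper nonnegative function which is `1`-Lipschitz along translation by `a`. -/
theorem aux_exists_h (a : G) :
    ∃ h : G → ℝ, Continuous h ∧ (∀ x, 0 ≤ h x) ∧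
      (∀ x, h x ≤ h (x * a) + 1) ∧ (∀ x, h (x * a) ≤ h x + 1) ∧
      ∀ M : ℝ, ∃ K : Set G, IsCompact K ∧ ∀ x ∉ K, M < h x := by
  obtain ⟨h0, h0c, h0nn, h0p⟩ := aux_exists_proper (G := G)
  set T : G → ℤ → ℝ := fun x n => h0 (x * a ^ n) + |(n : ℝ)| with hT
  have hTnn : ∀ x n, 0 ≤ T x n := fun x n => add_nonneg (h0nn _) (abs_nonneg _)
  have hbdd : ∀ x : G, BddBelow (Set.range (T x)) :=
    fun x => ⟨0, by rintro _ ⟨n, rfl⟩; exact hTnn x n⟩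
  have hne : ∀ x : G, (Set.range (T x)).Nonempty := fun x => ⟨T x 0, ⟨0, rfl⟩⟩
  set h : G → ℝ := fun x => sInf (Set.range (T x)) with hh
  have hle : ∀ x n, h x ≤ T x n := fun x n => csInf_le (hbdd x) ⟨n, rfl⟩
  have hnn : ∀ x, 0 ≤ h x := fun x =>
    le_csInf (hne x) (by rintro _ ⟨n, rfl⟩; exact hTnn x n)
  have hkey : ∀ (x : G) (n : ℤ), (x * a) * a ^ (n - 1) = x * a ^ n := by
    intro x n
    rw [mul_assoc, ← zpow_one_add]
    congr 1
    ring
  have hkey2 : ∀ (x : G) (n : ℤ), x * a ^ (n + 1) = (x * a) * a ^ n := by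
    intro x n
    rw [mul_assoc, ← zpow_one_add]
    congr 1
    ring
  have lip1 : ∀ x, h (x * a) ≤ h x + 1 := by
    intro x
    have key : ∀ n : ℤ, h (x * a) - 1 ≤ T x n := by
      intro n
      have h1 : h (x * a) ≤ T (x * a) (n - 1) := hle _ _
      have h2 : T (x * a) (n - 1) = h0 (x * a ^ n) + |(n : ℝ) - 1| := by
        simp only [hT, hkey]
        norm_num
      have h3 : |(n : ℝ) - 1| ≤ |(n : ℝ)| + 1 := by
        calc |(n : ℝ) - 1| ≤ |(n : ℝ)| + |(1 : ℝ)| := abs_sub _ _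
          _ = |(n : ℝ)| + 1 := by norm_num
      simp only [hT]
      rw [h2] at h1
      linarith
    have := le_csInf (hne x) (by rintro _ ⟨n, rfl⟩; exact key n)
    linarith
  have lip2 : ∀ x, h x ≤ h (x * a) + 1 := by
    intro x
    have key : ∀ n : ℤ, h x - 1 ≤ T (x * a) n := by
      intro n
      have h1 : h x ≤ T x (n + 1) := hle _ _
      have h2 : T x (n + 1) = h0 ((x * a) * a ^ n) + |(n : ℝ) + 1| := by
        simp only [hT, hkey2]
        norm_num
      have h3 : |(n : ℝ) + 1| ≤ |(n : ℝ)| + 1 := by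
        calc |(n : ℝ) + 1| ≤ |(n : ℝ)| + |(1 : ℝ)| := abs_add_le _ _
          _ = |(n : ℝ)| + 1 := by norm_num
      simp only [hT]
      rw [h2] at h1
      linarith
    have := le_csInf (hne (x * a)) (by rintro _ ⟨n, rfl⟩; exact key n)
    linarith
  refine ⟨h, ?_, hnn, lip2, lip1, ?_⟩
  · -- continuity
    rw [continuous_iff_continuousAt]
    intro x0
    set c := h0 x0 with hc
    set m : ℤ := (⌈c⌉₊ : ℤ) + 2 with hm
    have hcm : c + 1 < (m : ℝ) := by
      have := Nat.le_ceil c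
      push_cast [hm]
      linarith
    have hmpos : (0 : ℤ) < m := by rw [hm]; positivity
    set F : Finset ℤ := Finset.Icc (-m) m with hF
    have h0F : (0 : ℤ) ∈ F := by simp only [hF, Finset.mem_Icc]; omega
    have hFne : F.Nonempty := ⟨0, h0F⟩
    set U : Set G := h0 ⁻¹' (Set.Iio (c + 1)) with hUdef
    have hUopen : IsOpen U := isOpen_Iio.preimage h0c
    have hx0U : x0 ∈ U := by simp [hUdef, hc]
    have heq : ∀ y ∈ U, h y = F.inf' hFne (T y) := by
      intro y hy
      apply le_antisymm
      · obtain ⟨n0, hn0F, hn0⟩ := Finset.exists_mem_eq_inf' hFne (T y)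
        rw [hn0]
        exact hle y n0
      · apply le_csInf (hne y)
        rintro _ ⟨n, rfl⟩
        by_cases hn : n ∈ F
        · exact Finset.inf'_le _ hn
        · have h6 : (m : ℤ) < |n| := by
            simp only [hF, Finset.mem_Icc, not_and_or, not_le] at hn
            rcases hn with hn | hn
            · rw [abs_of_neg (by omega : n < 0)]; omega
            · rw [abs_of_pos (by omega : 0 < n)]; omega
          have hnm : (m : ℝ) < |(n : ℝ)| := by
            have : ((m:ℤ):ℝ) < ((|n|:ℤ):ℝ) := by exact_mod_cast h6
            rwa [Int.cast_abs] at this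
          calc F.inf' hFne (T y) ≤ T y 0 := Finset.inf'_le _ h0F
            _ ≤ c + 1 := by
                have hylt : h0 y < c + 1 := hy
                simp only [hT, zpow_zero, mul_one, Int.cast_zero, abs_zero, add_zero]
                linarith
            _ ≤ T y n := by
                have h5 : 0 ≤ h0 (y * a ^ n) := h0nn _
                simp only [hT]
                linarith
    have hcont : ContinuousAt (fun y => F.inf' hFne (T y)) x0 := by
      apply ContinuousAt.finset_inf'_apply hFne
      intro n _
      exact ((h0c.comp (continuous_mul_right (a ^ n))).add continuous_const).continuousAt
    apply hcont.congr
    filter_upwards [hUopen.mem_nhds hx0U] with y hy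
    exact (heq y hy).symm
  · -- properness
    intro M
    obtain ⟨K0, hK0c, hK0⟩ := h0p (M + 1)
    set m : ℤ := (⌈M⌉₊ : ℤ) + 1 with hm
    set K : Set G := ⋃ n ∈ Finset.Icc (-m) m, (fun y => y * a ^ (-n)) '' K0 with hK
    have hKc : IsCompact K := by
      apply Finset.isCompact_biUnion
      intro n _
      exact hK0c.image (continuous_mul_right _)
    refine ⟨K, hKc, fun x hx => ?_⟩
    by_contra hMh
    push_neg at hMh
    have hlt : h x < M + 1 := lt_of_le_of_lt hMh (by linarith)
    obtain ⟨t, ⟨n, rfl⟩, htlt⟩ := exists_lt_of_csInf_lt (hne x) hlt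
    have h1 : h0 (x * a ^ n) < M + 1 := by
      have := abs_nonneg ((n : ℝ)); simp only [hT] at htlt; linarith
    have h2 : |(n : ℝ)| < M + 1 := by
      have := h0nn (x * a ^ n); simp only [hT] at htlt; linarith
    have hMm : M + 1 ≤ (m : ℝ) := by
      have := Nat.le_ceil M
      push_cast [hm]
      linarith
    have h6 : |n| < m := by
      have h7 : ((|n| : ℤ) : ℝ) < ((m : ℤ) : ℝ) := by
        rw [Int.cast_abs]
        exact lt_of_lt_of_le h2 hMm
      exact_mod_cast h7
    have hnI : n ∈ Finset.Icc (-m) m := by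
      simp only [Finset.mem_Icc]
      have := abs_lt.mp h6
      omega
    have hmem : x * a ^ n ∈ K0 := by
      by_contra hmem
      exact absurd (hK0 _ hmem) (by linarith)
    apply hx
    rw [hK]
    apply Set.mem_biUnion hnI
    exact ⟨x * a ^ n, hmem, by group⟩


section Op

variable [MeasurableSpace G] [BorelSpace G] {μ : Measure G} {p : ℝ≥0∞} [Fact (1 ≤ p)]

/-- comparison of Lp norms from a pointwise domination. -/
theorem aux_norm_toLp_le {u g : G → ℂ} (hu : MemLp u p μ) (hg : MemLp g p μ)
    {c : ℝ} (hc : 0 ≤ c) (hpt : ∀ y, ‖u y‖ ≤ c * ‖g y‖) :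
    ‖hu.toLp u‖ ≤ c * ‖hg.toLp g‖ := by
  have h1 : eLpNorm u p μ ≤ eLpNorm ((c : ℂ) • g) p μ := by
    apply eLpNorm_mono
    intro y
    have : ‖(c : ℂ) • g y‖ = c * ‖g y‖ := by
      rw [norm_smul, Complex.norm_real, Real.norm_eq_abs, abs_of_nonneg hc]
    rw [Pi.smul_apply, this]
    exact hpt y
  have h2 : eLpNorm ((c : ℂ) • g) p μ = ‖(c : ℂ)‖₊ • eLpNorm g p μ :=
    eLpNorm_const_smul _ _ _ _
  rw [Lp.norm_toLp, Lp.norm_toLp]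
  have h3 : eLpNorm u p μ ≤ (‖(c : ℂ)‖₊ : ℝ≥0∞) * eLpNorm g p μ := by
    refine h1.trans (le_of_eq ?_)
    rw [h2, ENNReal.smul_def, smul_eq_mul]
  calc (eLpNorm u p μ).toReal ≤ ((‖(c : ℂ)‖₊ : ℝ≥0∞) * eLpNorm g p μ).toReal := by
        apply ENNReal.toReal_mono
        · exact ENNReal.mul_ne_top ENNReal.coe_ne_top hg.eLpNorm_ne_top
        · exact h3
    _ = c * (eLpNorm g p μ).toReal := by
        rw [ENNReal.toReal_mul, ENNReal.coe_toReal, coe_nnnorm, Complex.norm_real,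
          Real.norm_eq_abs, abs_of_nonneg hc]

/-- The multiplication operator by a bounded continuous function, as a CLM on Lp. -/
theorem aux_exists_mul_clm (w : G → ℝ) (hw : Continuous w) (C : ℝ) (hC0 : 0 ≤ C)
    (hC : ∀ x, |w x| ≤ C) :
    ∃ M : Lp ℂ p μ →L[ℂ] Lp ℂ p μ, ∀ f : Lp ℂ p μ,
      M f =ᵐ[μ] fun x => (w x : ℂ) * f x := by
  have hmeas : AEStronglyMeasurable (fun x => (w x : ℂ)) μ :=
    (Complex.continuous_ofReal.comp hw).aestronglyMeasurable
  have hmem : ∀ f : Lp ℂ p μ, MemLp (fun x => (w x : ℂ) * f x) p μ := by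
    intro f
    refine ⟨hmeas.mul (Lp.aestronglyMeasurable f), ?_⟩
    have h1 : eLpNorm (fun x => (w x : ℂ) * f x) p μ ≤ eLpNorm ((C : ℂ) • ⇑f) p μ := by
      apply eLpNorm_mono
      intro y
      simp only [Pi.smul_apply]
      rw [norm_mul, norm_smul, Complex.norm_real, Complex.norm_real, Real.norm_eq_abs,
        Real.norm_eq_abs, abs_of_nonneg hC0]
      exact mul_le_mul_of_nonneg_right (hC y) (norm_nonneg _)
    calc eLpNorm (fun x => (w x : ℂ) * f x) p μ ≤ eLpNorm ((C : ℂ) • ⇑f) p μ := h1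
      _ = ‖(C : ℂ)‖₊ • eLpNorm (⇑f) p μ := eLpNorm_const_smul _ _ _ _
      _ < ∞ := by
          rw [ENNReal.smul_def, smul_eq_mul]
          exact ENNReal.mul_lt_top ENNReal.coe_lt_top (Lp.eLpNorm_lt_top f)
  set L : Lp ℂ p μ →ₗ[ℂ] Lp ℂ p μ :=
    { toFun := fun f => (hmem f).toLp _
      map_add' := by
        intro f g
        rw [← MemLp.toLp_add (hmem f) (hmem g)]
        apply MemLp.toLp_congr
        filter_upwards [Lp.coeFn_add f g] with x hx
        simp only [hx, Pi.add_apply]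
        ring
      map_smul' := by
        intro c f
        simp only [RingHom.id_apply]
        rw [← MemLp.toLp_const_smul c (hmem f)]
        apply MemLp.toLp_congr
        filter_upwards [Lp.coeFn_smul c f] with x hx
        simp only [hx, Pi.smul_apply, smul_eq_mul, RingHom.id_apply]
        ring } with hL
  refine ⟨L.mkContinuous C ?_, fun f => MemLp.coeFn_toLp (hmem f)⟩
  intro f
  show ‖(hmem f).toLp _‖ ≤ C * ‖f‖
  have h4 : ‖(hmem f).toLp _‖ ≤ C * ‖(Lp.memLp f).toLp ⇑f‖ := by
    apply aux_norm_toLp_le (hmem f) (Lp.memLp f) hC0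
    intro y
    rw [norm_mul, Complex.norm_real, Real.norm_eq_abs]
    exact mul_le_mul_of_nonneg_right (hC y) (norm_nonneg _)
  rwa [Lp.toLp_coeFn] at h4

end Op

end Aux

/-- If `a` is an aperiodic element of a second countable locally compact Hausdorff group
`G` with right Haar measure `μ`, then for every `p ∈ [1, ∞)` there is a bounded
continuous weight `w : G → (0, ∞)` such that the weighted translation
`T_{a,w} f = w · f(· a⁻¹)` is hypercyclic on `L^p(G)`: some `f` has dense orbit. -/
theorem exists_weight_weightedTranslation_hypercyclic
    {G : Type*} [Group G] [TopologicalSpace G] [IsTopologicalGroup G]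
    [LocallyCompactSpace G] [T2Space G] [SecondCountableTopology G]
    [MeasurableSpace G] [BorelSpace G]
    (μ : Measure G) [μ.Regular] [μ.IsMulRightInvariant] [μ.IsOpenPosMeasure]
    (a : G) (ha : IsAperiodic a) :
    ∀ (p : ℝ≥0∞) [Fact (1 ≤ p)], p ≠ ∞ →
      ∃ w : G → ℝ, Continuous w ∧ (∀ x, 0 < w x) ∧ (∃ C : ℝ, ∀ x, w x ≤ C) ∧
        ∃ T : Lp ℂ p μ →L[ℂ] Lp ℂ p μ,
          (∀ f : Lp ℂ p μ, T f =ᵐ[μ] fun x => (w x : ℂ) * f (x * a⁻¹)) ∧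
          ∃ f : Lp ℂ p μ, Dense (Set.range fun n : ℕ => (T ^ n) f) := by
  intro p hpfact hptop
  haveI : Fact (p ≠ ∞) := ⟨hptop⟩
  obtain ⟨φ, hφmono, hφesc⟩ := aux_escape a ha
  obtain ⟨h, hhc, hhnn, hlip2, hlip1, hprop⟩ := aux_exists_h a
  -- the weight
  set w : G → ℝ := fun x => Real.exp (h (x * a⁻¹) - h x) with hwdef
  have hwc : Continuous w :=
    Real.continuous_exp.comp ((hhc.comp (continuous_mul_right a⁻¹)).sub hhc)
  have hwpos : ∀ x, 0 < w x := fun x => Real.exp_pos _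
  have hwbd : ∀ x, w x ≤ Real.exp 1 := by
    intro x
    apply Real.exp_le_exp.mpr
    have h1 := hlip2 (x * a⁻¹)
    simp only [inv_mul_cancel_right] at h1
    linarith
  have hwabs : ∀ x, |w x| ≤ Real.exp 1 := fun x => by
    rw [abs_of_pos (hwpos x)]; exact hwbd x
  -- the operator
  obtain ⟨Mw, hMw⟩ := aux_exists_mul_clm (μ := μ) (p := p) w hwc (Real.exp 1)
    (Real.exp_nonneg 1) hwabs
  have hρ : MeasurePreserving (fun x : G => x * a⁻¹) μ μ := measurePreserving_mul_right μ a⁻¹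
  set R : Lp ℂ p μ →L[ℂ] Lp ℂ p μ :=
    (Lp.compMeasurePreservingₗᵢ ℂ (fun x : G => x * a⁻¹) hρ).toContinuousLinearMap with hRdef
  set T : Lp ℂ p μ →L[ℂ] Lp ℂ p μ := Mw.comp R with hTdef
  have hTae : ∀ f : Lp ℂ p μ, T f =ᵐ[μ] fun x => (w x : ℂ) * f (x * a⁻¹) := by
    intro f
    have h1 : ⇑(R f) =ᵐ[μ] (⇑f) ∘ (fun x : G => x * a⁻¹) :=
      Lp.coeFn_compMeasurePreserving f hρ
    have h2 := hMw (R f)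
    filter_upwards [h1, h2] with x hx1 hx2
    show (Mw (R f)) x = _
    rw [hx2, hx1]
    rfl
  -- membership of nice functions
  have memg : ∀ (g : G → ℂ), Continuous g → HasCompactSupport g → MemLp g p μ :=
    fun g hgc hgs => hgc.memLp_of_hasCompactSupport hgs
  -- forward and backward weighted translates of functions
  set TA : ℕ → (G → ℂ) → (G → ℂ) :=
    fun n g x => (Real.exp (h (x * (a ^ n)⁻¹) - h x) : ℂ) * g (x * (a ^ n)⁻¹) with hTAdef
  set SA : ℕ → (G → ℂ) → (G → ℂ) :=
    fun n g x => (Real.exp (h (x * a ^ n) - h x) : ℂ) * g (x * a ^ n) with hSAdef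
  have hTAc : ∀ (n : ℕ) (g : G → ℂ), Continuous g → Continuous (TA n g) := by
    intro n g hgc
    apply Continuous.mul
    · exact Complex.continuous_ofReal.comp
        (Real.continuous_exp.comp ((hhc.comp (continuous_mul_right _)).sub hhc))
    · exact hgc.comp (continuous_mul_right _)
  have hSAc : ∀ (n : ℕ) (g : G → ℂ), Continuous g → Continuous (SA n g) := by
    intro n g hgc
    apply Continuous.mul
    · exact Complex.continuous_ofReal.comp
        (Real.continuous_exp.comp ((hhc.comp (continuous_mul_right _)).sub hhc))
    · exact hgc.comp (continuous_mul_right _)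
  have hTAs : ∀ (n : ℕ) (g : G → ℂ), HasCompactSupport g → HasCompactSupport (TA n g) := by
    intro n g hgs
    have h1 : HasCompactSupport (g ∘ (Homeomorph.mulRight ((a ^ n)⁻¹))) :=
      hgs.comp_homeomorph _
    exact HasCompactSupport.mul_left h1
  have hSAs : ∀ (n : ℕ) (g : G → ℂ), HasCompactSupport g → HasCompactSupport (SA n g) := by
    intro n g hgs
    have h1 : HasCompactSupport (g ∘ (Homeomorph.mulRight (a ^ n))) :=
      hgs.comp_homeomorph _
    exact HasCompactSupport.mul_left h1
  have memTA : ∀ (n : ℕ) (g : G → ℂ), Continuous g → HasCompactSupport g →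
      MemLp (TA n g) p μ :=
    fun n g hgc hgs => memg _ (hTAc n g hgc) (hTAs n g hgs)
  have memSA : ∀ (n : ℕ) (g : G → ℂ), Continuous g → HasCompactSupport g →
      MemLp (SA n g) p μ :=
    fun n g hgc hgs => memg _ (hSAc n g hgc) (hSAs n g hgs)
  -- action of T on toLp
  have hT_toLp : ∀ (v : G → ℂ) (hv : MemLp v p μ)
      (hv2 : MemLp (fun x => (w x : ℂ) * v (x * a⁻¹)) p μ),
      T (hv.toLp v) = hv2.toLp _ := by
    intro v hv hv2
    apply Lp.ext
    have h0 := hTae (hv.toLp v)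
    have h1 : (⇑(hv.toLp v)) ∘ (fun x : G => x * a⁻¹) =ᵐ[μ] v ∘ (fun x : G => x * a⁻¹) :=
      hρ.quasiMeasurePreserving.ae_eq_comp (hv.coeFn_toLp)
    filter_upwards [h0, h1, hv2.coeFn_toLp] with x hx0 hx1 hx2
    rw [hx0, hx2]
    show (w x : ℂ) * ((⇑(hv.toLp v)) ∘ (fun x : G => x * a⁻¹)) x = _
    rw [hx1]
    rfl
  -- iterates of T on compactly supported continuous functions
  have hTpow : ∀ (g : G → ℂ) (hgc : Continuous g) (hgs : HasCompactSupport g) (n : ℕ),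
      (T ^ n) ((memg g hgc hgs).toLp g) = (memTA n g hgc hgs).toLp (TA n g) := by
    intro g hgc hgs n
    induction n with
    | zero =>
      rw [pow_zero, ContinuousLinearMap.one_apply]
      apply MemLp.toLp_congr
      apply Filter.EventuallyEq.of_eq
      funext x
      simp only [hTAdef, pow_zero, inv_one, mul_one, sub_self, Real.exp_zero,
        Complex.ofReal_one, one_mul]
    | succ n ih =>
      rw [pow_succ', ContinuousLinearMap.mul_apply, ih,
        hT_toLp (TA n g) (memTA n g hgc hgs)
          (by
            have : (fun x => (w x : ℂ) * (TA n g) (x * a⁻¹)) = TA (n + 1) g := by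
              funext x
              simp only [hTAdef, hwdef]
              rw [← mul_assoc, ← Complex.ofReal_mul, ← Real.exp_add]
              have hxid : x * a⁻¹ * (a ^ n)⁻¹ = x * (a ^ (n + 1))⁻¹ := by
                rw [pow_succ, mul_inv_rev, ← mul_assoc]
              rw [hxid]
              congr 2
              ring
            rw [this]
            exact memTA (n + 1) g hgc hgs)]
      apply MemLp.toLp_congr
      apply Filter.EventuallyEq.of_eq
      funext x
      simp only [hTAdef, hwdef]
      rw [← mul_assoc, ← Complex.ofReal_mul, ← Real.exp_add]
      have hxid : x * a⁻¹ * (a ^ n)⁻¹ = x * (a ^ (n + 1))⁻¹ := by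
        rw [pow_succ, mul_inv_rev, ← mul_assoc]
      rw [hxid]
      congr 2
      ring
  -- T^n ∘ S_n = id on compactly supported continuous functions
  have hTS : ∀ (n : ℕ) (g : G → ℂ), TA n (SA n g) = g := by
    intro n g
    funext x
    simp only [hTAdef, hSAdef, inv_mul_cancel_right]
    rw [← mul_assoc, ← Complex.ofReal_mul, ← Real.exp_add]
    have : h (x * (a ^ n)⁻¹) - h x + (h x - h (x * (a ^ n)⁻¹)) = 0 := by ring
    rw [this, Real.exp_zero, Complex.ofReal_one, one_mul]
  -- norm estimates
  have hnormTA : ∀ (n : ℕ) (g : G → ℂ) (hgc : Continuous g) (hgs : HasCompactSupport g)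
      (B M : ℝ), (∀ y ∈ tsupport g, h y ≤ B) → (∀ y ∈ tsupport g, M ≤ h (y * a ^ n)) →
      ‖(memTA n g hgc hgs).toLp (TA n g)‖ ≤ Real.exp (B - M) * ‖(memg g hgc hgs).toLp g‖ := by
    intro n g hgc hgs B M hB hM
    have hτ : MeasurePreserving (fun y : G => y * a ^ n) μ μ :=
      measurePreserving_mul_right μ (a ^ n)
    calc ‖(memTA n g hgc hgs).toLp (TA n g)‖
        = ‖Lp.compMeasurePreserving _ hτ ((memTA n g hgc hgs).toLp (TA n g))‖ :=
          (Lp.norm_compMeasurePreserving _ hτ).symm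
      _ = ‖((memTA n g hgc hgs).comp_measurePreserving hτ).toLp
            ((TA n g) ∘ (fun y : G => y * a ^ n))‖ := by
          rw [Lp.toLp_compMeasurePreserving]
      _ ≤ Real.exp (B - M) * ‖(memg g hgc hgs).toLp g‖ := by
          apply aux_norm_toLp_le _ _ (Real.exp_nonneg _)
          intro y
          show ‖(TA n g) (y * a ^ n)‖ ≤ _
          simp only [hTAdef, mul_inv_cancel_right]
          rw [norm_mul, Complex.norm_real, Real.norm_eq_abs,
            abs_of_pos (Real.exp_pos _)]
          by_cases hy : y ∈ tsupport g
          · exact mul_le_mul_of_nonneg_right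
              (Real.exp_le_exp.mpr (by have := hB y hy; have := hM y hy; linarith))
              (norm_nonneg _)
          · rw [image_eq_zero_of_notMem_tsupport hy]
            simp
  have hnormSA : ∀ (n : ℕ) (g : G → ℂ) (hgc : Continuous g) (hgs : HasCompactSupport g)
      (B M : ℝ), (∀ y ∈ tsupport g, h y ≤ B) → (∀ y ∈ tsupport g, M ≤ h (y * (a ^ n)⁻¹)) →
      ‖(memSA n g hgc hgs).toLp (SA n g)‖ ≤ Real.exp (B - M) * ‖(memg g hgc hgs).toLp g‖ := by
    intro n g hgc hgs B M hB hM
    have hτ : MeasurePreserving (fun y : G => y * (a ^ n)⁻¹) μ μ :=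
      measurePreserving_mul_right μ (a ^ n)⁻¹
    calc ‖(memSA n g hgc hgs).toLp (SA n g)‖
        = ‖Lp.compMeasurePreserving _ hτ ((memSA n g hgc hgs).toLp (SA n g))‖ :=
          (Lp.norm_compMeasurePreserving _ hτ).symm
      _ = ‖((memSA n g hgc hgs).comp_measurePreserving hτ).toLp
            ((SA n g) ∘ (fun y : G => y * (a ^ n)⁻¹))‖ := by
          rw [Lp.toLp_compMeasurePreserving]
      _ ≤ Real.exp (B - M) * ‖(memg g hgc hgs).toLp g‖ := by
          apply aux_norm_toLp_le _ _ (Real.exp_nonneg _)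
          intro y
          show ‖(SA n g) (y * (a ^ n)⁻¹)‖ ≤ _
          simp only [hSAdef, inv_mul_cancel_right]
          rw [norm_mul, Complex.norm_real, Real.norm_eq_abs,
            abs_of_pos (Real.exp_pos _)]
          by_cases hy : y ∈ tsupport g
          · exact mul_le_mul_of_nonneg_right
              (Real.exp_le_exp.mpr (by have := hB y hy; have := hM y hy; linarith))
              (norm_nonneg _)
          · rw [image_eq_zero_of_notMem_tsupport hy]
            simp
  -- eventual smallness along the escaping sequence
  have hev : ∀ (g : G → ℂ) (hgc : Continuous g) (hgs : HasCompactSupport g) (ε : ℝ), 0 < ε →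
      (∀ᶠ k in atTop, ‖(T ^ φ k) ((memg g hgc hgs).toLp g)‖ < ε) ∧
      (∀ᶠ k in atTop, ‖(memSA (φ k) g hgc hgs).toLp (SA (φ k) g)‖ < ε) := by
    intro g hgc hgs ε hε
    set ng := ‖(memg g hgc hgs).toLp g‖ with hng
    have hngnn : 0 ≤ ng := norm_nonneg _
    obtain ⟨B, hB⟩ : ∃ B, ∀ y ∈ tsupport g, h y ≤ B := by
      obtain ⟨B, hB⟩ := (hgs.bddAbove_image hhc.continuousOn)
      exact ⟨B, fun y hy => hB (Set.mem_image_of_mem h hy)⟩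
    set M := B - Real.log (ε / (ng + 1)) with hMdef
    have hcmp : Real.exp (B - M) * ng < ε := by
      have hq : (0 : ℝ) < ε / (ng + 1) := by positivity
      have : B - M = Real.log (ε / (ng + 1)) := by rw [hMdef]; ring
      rw [this, Real.exp_log hq]
      rw [div_mul_eq_mul_div, div_lt_iff₀ (by linarith)]
      nlinarith
    obtain ⟨KM, hKMc, hKM⟩ := hprop M
    have hKg : IsCompact (tsupport g) := hgs
    constructor
    · have hesc := hφesc ((tsupport g)⁻¹ * KM) (hKg.inv.mul hKMc)
      filter_upwards [hesc] with k hk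
      have hcond : ∀ y ∈ tsupport g, M ≤ h (y * a ^ φ k) := by
        intro y hy
        by_contra hlt
        push_neg at hlt
        have hmem : y * a ^ φ k ∈ KM := by
          by_contra hnot
          exact absurd (hKM _ hnot) (by linarith)
        apply hk
        have : y⁻¹ * (y * a ^ φ k) ∈ (tsupport g)⁻¹ * KM :=
          Set.mul_mem_mul (Set.inv_mem_inv.mpr hy) hmem
        simpa using this
      calc ‖(T ^ φ k) ((memg g hgc hgs).toLp g)‖
          = ‖(memTA (φ k) g hgc hgs).toLp (TA (φ k) g)‖ := by rw [hTpow g hgc hgs (φ k)]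
        _ ≤ Real.exp (B - M) * ng := hnormTA (φ k) g hgc hgs B M hB hcond
        _ < ε := hcmp
    · have hesc := hφesc (KM⁻¹ * tsupport g) (hKMc.inv.mul hKg)
      filter_upwards [hesc] with k hk
      have hcond : ∀ y ∈ tsupport g, M ≤ h (y * (a ^ φ k)⁻¹) := by
        intro y hy
        by_contra hlt
        push_neg at hlt
        have hmem : y * (a ^ φ k)⁻¹ ∈ KM := by
          by_contra hnot
          exact absurd (hKM _ hnot) (by linarith)
        apply hk
        have : (y * (a ^ φ k)⁻¹)⁻¹ * y ∈ KM⁻¹ * tsupport g :=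
          Set.mul_mem_mul (Set.inv_mem_inv.mpr hmem) hy
        simpa [mul_assoc] using this
      calc ‖(memSA (φ k) g hgc hgs).toLp (SA (φ k) g)‖
          ≤ Real.exp (B - M) * ng := hnormSA (φ k) g hgc hgs B M hB hcond
        _ < ε := hcmp
  -- density of compactly supported continuous functions
  have hdense : ∀ (u : Lp ℂ p μ) (ε : ℝ), 0 < ε →
      ∃ (g : G → ℂ) (hgc : Continuous g) (hgs : HasCompactSupport g),
        ‖u - (memg g hgc hgs).toLp g‖ < ε := by
    intro u ε hε
    obtain ⟨g, hgs, hsub, hgc, hgm⟩ :=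
      (Lp.memLp u).exists_hasCompactSupport_eLpNorm_sub_le hptop
        (ε := ENNReal.ofReal (ε / 2)) (by
          simp only [ne_eq, ENNReal.ofReal_eq_zero, not_le]
          linarith)
    refine ⟨g, hgc, hgs, ?_⟩
    have h1 : ⇑(u - (memg g hgc hgs).toLp g) =ᵐ[μ] ⇑u - g := by
      filter_upwards [Lp.coeFn_sub u ((memg g hgc hgs).toLp g),
        (memg g hgc hgs).coeFn_toLp] with x hx1 hx2
      simp only [hx1, Pi.sub_apply, hx2]
    rw [Lp.norm_def, eLpNorm_congr_ae h1]
    calc (eLpNorm (⇑u - g) p μ).toReal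
        ≤ (ENNReal.ofReal (ε / 2)).toReal :=
          ENNReal.toReal_mono ENNReal.ofReal_ne_top hsub
      _ = ε / 2 := ENNReal.toReal_ofReal (by linarith)
      _ < ε := by linarith
  -- topological transitivity
  have htrans : ∀ U V : Set (Lp ℂ p μ), IsOpen U → U.Nonempty → IsOpen V → V.Nonempty →
      ∃ (z : Lp ℂ p μ) (n : ℕ), z ∈ U ∧ (T ^ n) z ∈ V := by
    intro U V hUo hUne hVo hVne
    obtain ⟨u, hu⟩ := hUne
    obtain ⟨v, hv⟩ := hVne
    obtain ⟨ε1, hε1, hball1⟩ := Metric.isOpen_iff.mp hUo u hu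
    obtain ⟨ε2, hε2, hball2⟩ := Metric.isOpen_iff.mp hVo v hv
    set ε := min ε1 ε2 with hεdef
    have hεpos : 0 < ε := lt_min hε1 hε2
    obtain ⟨g1, hg1c, hg1s, hg1⟩ := hdense u (ε / 2) (by linarith)
    obtain ⟨g2, hg2c, hg2s, hg2⟩ := hdense v (ε / 2) (by linarith)
    obtain ⟨k, hk1, hk2⟩ :=
      (((hev g1 hg1c hg1s (ε / 2) (by linarith)).1).and
        ((hev g2 hg2c hg2s (ε / 2) (by linarith)).2)).exists
    set z := (memg g1 hg1c hg1s).toLp g1 + (memSA (φ k) g2 hg2c hg2s).toLp (SA (φ k) g2)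
      with hzdef
    refine ⟨z, φ k, ?_, ?_⟩
    · apply hball1
      rw [Metric.mem_ball, dist_eq_norm]
      have hsplit : z - u = ((memg g1 hg1c hg1s).toLp g1 - u) +
          (memSA (φ k) g2 hg2c hg2s).toLp (SA (φ k) g2) := by
        rw [hzdef]; abel
      calc ‖z - u‖ ≤ ‖(memg g1 hg1c hg1s).toLp g1 - u‖ +
            ‖(memSA (φ k) g2 hg2c hg2s).toLp (SA (φ k) g2)‖ := by
            rw [hsplit]; exact norm_add_le _ _
        _ < ε / 2 + ε / 2 := by
            apply add_lt_add _ hk2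
            rw [norm_sub_rev]
            exact hg1
        _ = ε := by ring
        _ ≤ ε1 := min_le_left _ _
    · apply hball2
      rw [Metric.mem_ball, dist_eq_norm]
      have hTz : (T ^ φ k) z = (T ^ φ k) ((memg g1 hg1c hg1s).toLp g1) +
          (memg g2 hg2c hg2s).toLp g2 := by
        rw [hzdef, map_add]
        congr 1
        rw [hTpow (SA (φ k) g2) (hSAc _ _ hg2c) (hSAs _ _ hg2s) (φ k)]
        apply MemLp.toLp_congr
        apply Filter.EventuallyEq.of_eq
        rw [hTS]
      have hsplit : (T ^ φ k) z - v = (T ^ φ k) ((memg g1 hg1c hg1s).toLp g1) +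
          ((memg g2 hg2c hg2s).toLp g2 - v) := by
        rw [hTz]; abel
      calc ‖(T ^ φ k) z - v‖
          ≤ ‖(T ^ φ k) ((memg g1 hg1c hg1s).toLp g1)‖ +
            ‖(memg g2 hg2c hg2s).toLp g2 - v‖ := by
            rw [hsplit]; exact norm_add_le _ _
        _ < ε / 2 + ε / 2 := by
            apply add_lt_add hk1
            rw [norm_sub_rev]
            exact hg2
        _ = ε := by ring
        _ ≤ ε2 := min_le_right _ _
  -- Baire category argument
  refine ⟨w, hwc, hwpos, ⟨Real.exp 1, hwbd⟩, T, hTae, ?_⟩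
  haveI : Nonempty (Lp ℂ p μ) := ⟨0⟩
  set 𝔅 := TopologicalSpace.countableBasis (Lp ℂ p μ) with h𝔅
  have hbasis := TopologicalSpace.isBasis_countableBasis (Lp ℂ p μ)
  set 𝔅' := {s ∈ 𝔅 | s.Nonempty} with h𝔅'
  have h𝔅'cnt : 𝔅'.Countable :=
    (TopologicalSpace.countable_countableBasis (Lp ℂ p μ)).mono (Set.sep_subset _ _)
  have hGδ : Dense (⋂ s ∈ 𝔅', ⋃ n : ℕ, (T ^ n) ⁻¹' s) := by
    apply dense_biInter_of_isOpen
      (fun s hs => isOpen_iUnion fun n => (hbasis.isOpen hs.1).preimage (T ^ n).continuous)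
      h𝔅'cnt
    · intro s hs
      rw [dense_iff_inter_open]
      intro U hUo hUne
      obtain ⟨z, n, hzU, hzs⟩ := htrans U s hUo hUne (hbasis.isOpen hs.1) hs.2
      exact ⟨z, hzU, Set.mem_iUnion.mpr ⟨n, hzs⟩⟩
  obtain ⟨f, hf⟩ := hGδ.nonempty
  refine ⟨f, ?_⟩
  rw [dense_iff_inter_open]
  intro U hUo hUne
  obtain ⟨u, hu⟩ := hUne
  obtain ⟨s, hs𝔅, hus, hsU⟩ := hbasis.exists_subset_of_mem_open hu hUo
  have hs' : s ∈ 𝔅' := ⟨hs𝔅, ⟨u, hus⟩⟩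
  have hfs : f ∈ ⋃ n : ℕ, (T ^ n) ⁻¹' s := by
    have := Set.mem_iInter₂.mp hf s hs'
    exact this
  obtain ⟨n, hn⟩ := Set.mem_iUnion.mp hfs
  exact ⟨(T ^ n) f, ⟨hsU hn, Set.mem_range_self n⟩⟩
end
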